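/- arXiv:2101.03130 — 7 statements merged into one kernel-verified Lean document; each statement's English description precedes it below -/
import Mathlib

section
/- For every polynomial p in R[X_1,…,X_N], the operator identity (X·X)·Δp = E(E(p)) + (N−2)·E(p) + Σ_{1≤j<k≤N} M_{jk}(M_{jk}(p)) holds, where E = Σ_{j=1}^N X_j ∂/∂X_j is the Euler operator. -/
open MvPolynomial

/-- The rotation generator `M_{jk} p = X_j ∂_k p − X_k ∂_j p`. -/
noncomputable def rot {R : Type*} [CommRing R] {N : ℕ} (j k : Fin N)
    (p : MvPolynomial (Fin N) R) : MvPolynomial (Fin N) R :=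
  X j * pderiv k p - X k * pderiv j p

/-- The Laplacian `Δ p = Σ_j ∂_j² p`. -/
noncomputable def lap {R : Type*} [CommRing R] {N : ℕ}
    (p : MvPolynomial (Fin N) R) : MvPolynomial (Fin N) R :=
  ∑ j, pderiv j (pderiv j p)

/-- The polynomial `X·X = X_1² + ⋯ + X_N²`. -/
noncomputable def XX (R : Type*) [CommRing R] (N : ℕ) : MvPolynomial (Fin N) R :=
  ∑ j, X j ^ 2

/-- The Euler operator `E p = Σ_j X_j ∂_j p`. -/
noncomputable def euler {R : Type*} [CommRing R] {N : ℕ}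
    (p : MvPolynomial (Fin N) R) : MvPolynomial (Fin N) R :=
  ∑ j, X j * pderiv j p

lemma my_pderiv_comm {R : Type*} [CommRing R] {N : ℕ} (j k : Fin N)
    (p : MvPolynomial (Fin N) R) :
    pderiv j (pderiv k p) = pderiv k (pderiv j p) := by
  rcases eq_or_ne j k with rfl | hjk
  · rfl
  induction p using MvPolynomial.induction_on' with
  | monomial s a =>
    have h1 : (s - Finsupp.single k 1 : Fin N →₀ ℕ) j = s j := by
      simp [Finsupp.single_eq_of_ne' hjk.symm]
    have h2 : (s - Finsupp.single j 1 : Fin N →₀ ℕ) k = s k := by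
      simp [Finsupp.single_eq_of_ne' hjk]
    simp only [pderiv_monomial, h1, h2]
    rw [tsub_tsub, tsub_tsub, add_comm (Finsupp.single k 1)]
    congr 1
    ring
  | add p q hp hq => simp [hp, hq]

lemma my_pderiv_X_mul {R : Type*} [CommRing R] {N : ℕ} (j k : Fin N)
    (q : MvPolynomial (Fin N) R) :
    pderiv j (X k * q) = (if j = k then q else 0) + X k * pderiv j q := by
  rcases eq_or_ne j k with rfl | hjk
  · simp [pderiv_mul]; ring
  · simp [pderiv_mul, pderiv_X_of_ne hjk.symm, hjk]

lemma my_sum_pairs {M : Type*} [AddCommGroup M] {N : ℕ} (h : Fin N → Fin N → M) :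
    ∑ j : Fin N, ∑ k ∈ Finset.univ.filter (fun k => j < k), (h j k + h k j)
      = (∑ j : Fin N, ∑ k : Fin N, h j k) - ∑ j : Fin N, h j j := by
  classical
  have e1 : ∀ j : Fin N, ∑ k ∈ Finset.univ.filter (fun k => j < k), (h j k + h k j)
      = (∑ k : Fin N, if j < k then h j k else 0)
        + ∑ k : Fin N, if j < k then h k j else 0 := by
    intro j
    rw [← Finset.sum_add_distrib, Finset.sum_filter]
    exact Finset.sum_congr rfl fun k _ => by split_ifs <;> simp
  rw [eq_sub_iff_add_eq]
  simp only [e1, Finset.sum_add_distrib]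
  rw [Finset.sum_comm (f := fun j k => if j < k then h k j else 0)]
  have diag : ∑ j : Fin N, h j j
      = ∑ j : Fin N, ∑ k : Fin N, if j = k then h j k else 0 := by
    refine Finset.sum_congr rfl fun j _ => ?_
    simp
  rw [diag, ← Finset.sum_add_distrib, ← Finset.sum_add_distrib]
  refine Finset.sum_congr rfl fun j _ => ?_
  rw [← Finset.sum_add_distrib, ← Finset.sum_add_distrib]
  refine Finset.sum_congr rfl fun k _ => ?_
  rcases lt_trichotomy j k with hl | he | hg
  · simp [hl, hl.ne, lt_asymm hl]
  · subst he; simp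
  · simp [hg, lt_asymm hg, ne_of_gt hg]

/-- `(X·X)·Δp = E(E(p)) + (N−2)·E(p) + Σ_{j<k} M_{jk}(M_{jk} p)`. -/
theorem stmt0 {R : Type*} [CommRing R] {N : ℕ} (hN : 2 ≤ N)
    (p : MvPolynomial (Fin N) R) :
    XX R N * lap p =
      euler (euler p) + (N - 2) • euler p +
        ∑ j : Fin N, ∑ k ∈ Finset.univ.filter (fun k => j < k),
          rot j k (rot j k p) := by
  classical
  set T : MvPolynomial (Fin N) R := euler p with hT
  set S : MvPolynomial (Fin N) R :=
    ∑ j : Fin N, ∑ k : Fin N, X j * (X k * pderiv j (pderiv k p)) with hS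
  set L : MvPolynomial (Fin N) R :=
    ∑ j : Fin N, ∑ k : Fin N, X j ^ 2 * pderiv k (pderiv k p) with hL
  set h : Fin N → Fin N → MvPolynomial (Fin N) R := fun j k =>
    X j ^ 2 * pderiv k (pderiv k p) - X j * (X k * pderiv j (pderiv k p))
      - X j * pderiv j p with hh
  have hLHS : XX R N * lap p = L := by
    rw [XX, lap, Finset.sum_mul_sum]
  have heuler2 : euler (euler p) = T + S := by
    rw [hS, hT]
    simp only [euler, map_sum, my_pderiv_X_mul, Finset.mul_sum, mul_add,
      mul_ite, mul_zero, Finset.sum_add_distrib, Finset.sum_ite_eq]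
    simp
  have hrot : ∀ j k : Fin N, j < k →
      rot j k (rot j k p) = h j k + h k j := by
    intro j k hjk'
    have hjk : j ≠ k := ne_of_lt hjk'
    simp only [rot, map_sub, my_pderiv_X_mul, if_neg hjk, if_neg hjk.symm,
      if_pos rfl, if_true, hh]
    rw [my_pderiv_comm k j p]
    ring
  have hsum : ∑ j : Fin N, ∑ k ∈ Finset.univ.filter (fun k => j < k),
        rot j k (rot j k p)
      = (∑ j : Fin N, ∑ k : Fin N, h j k) - ∑ j : Fin N, h j j := by
    rw [← my_sum_pairs h]
    refine Finset.sum_congr rfl fun j _ => Finset.sum_congr rfl fun k hk => ?_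
    exact hrot j k (Finset.mem_filter.mp hk).2
  have hdiag : ∑ j : Fin N, h j j = -T := by
    rw [hT, euler, ← Finset.sum_neg_distrib]
    refine Finset.sum_congr rfl fun j _ => ?_
    simp only [hh]
    ring
  have hfull : (∑ j : Fin N, ∑ k : Fin N, h j k) = L - S - N • T := by
    simp only [hh, Finset.sum_sub_distrib, hL, hS]
    rw [sub_right_inj]
    rw [hT, euler, Finset.smul_sum]
    refine Finset.sum_congr rfl fun j _ => ?_
    simp [Finset.sum_const, Finset.card_univ]
  have hNsmul : (N : ℕ) • T = (N - 2) • T + T + T := by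
    have h2 : N - 2 + 1 + 1 = N := by omega
    calc N • T = (N - 2 + 1 + 1) • T := by rw [h2]
      _ = (N - 2) • T + T + T := by rw [succ_nsmul, succ_nsmul]
  rw [hLHS, heuler2, hsum, hdiag, hfull, hNsmul]
  abel
end

section
/- Suppose that for every positive integer n, n·1_R is not a zero divisor in R. A polynomial p ∈ R[X_1,…,X_N] satisfies M_{jk}(p) = 0 for all pairs of distinct indices j, k ∈ {1,…,N} if and only if p = q(X_1²+⋯+X_N²) for some single-variable polynomial q(T) ∈ R[T]. Moreover, if such a p is nonzero and homogeneous of degree d, then d is even and p = c·(X·X)^{d/2} for some c ∈ R. -/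
open MvPolynomial

section Aux
open Finset
variable {R : Type*} [CommRing R] {N : ℕ}


lemma degree_fin (s : Fin N →₀ ℕ) : ∑ j, s j = s.degree :=
  (Finset.sum_subset (Finset.subset_univ _)
    (fun x _ hx => Finsupp.notMem_support_iff.mp hx)).symm

lemma pderiv_comm' (i j : Fin N) (p : MvPolynomial (Fin N) R) :
    pderiv i (pderiv j p) = pderiv j (pderiv i p) := by
  by_cases hij : i = j
  · subst hij; rfl
  rw [p.as_sum, map_sum, map_sum, map_sum, map_sum]
  refine Finset.sum_congr rfl fun s _ => ?_
  rw [pderiv_monomial, pderiv_monomial, pderiv_monomial, pderiv_monomial]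
  have h1 : s - Finsupp.single j 1 - Finsupp.single i 1
      = s - Finsupp.single i 1 - Finsupp.single j 1 := by
    ext a; simp only [Finsupp.tsub_apply]; omega
  have h2 : ((s - Finsupp.single j 1 : Fin N →₀ ℕ)) i = s i := by
    rw [Finsupp.tsub_apply, Finsupp.single_apply]
    simp [Ne.symm hij]
  have h3 : ((s - Finsupp.single i 1 : Fin N →₀ ℕ)) j = s j := by
    rw [Finsupp.tsub_apply, Finsupp.single_apply]
    simp [hij]
  rw [h1, h2, h3, mul_right_comm]

lemma euler_monomial (s : Fin N →₀ ℕ) (a : R) :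
    ∑ j : Fin N, X j * pderiv j (monomial s a) = monomial s (a * (s.degree : R)) := by
  have : ∀ j : Fin N, X j * pderiv j (monomial s a) = monomial s (a * (s j : R)) := by
    intro j
    rw [pderiv_monomial , X, monomial_mul]
    by_cases h : s j = 0
    · rw [h]; simp
    · have e : Finsupp.single j 1 + (s - Finsupp.single j 1) = s := by
        ext b
        simp only [Finsupp.add_apply, Finsupp.tsub_apply, Finsupp.single_apply]
        split
        · next hjb => subst hjb; omega
        · omega
      rw [e, one_mul]
  rw [Finset.sum_congr rfl fun j _ => this j, ← map_sum, ← Finset.mul_sum]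
  norm_cast
  rw [degree_fin]

lemma euler_s2 {p : MvPolynomial (Fin N) R} {d : ℕ} (hp : p.IsHomogeneous d) :
    ∑ j : Fin N, X j * pderiv j p = d • p := by
  conv_lhs => rw [p.as_sum]
  conv_rhs => rw [p.as_sum]
  simp only [map_sum, Finset.mul_sum, Finset.smul_sum]
  rw [Finset.sum_comm]
  refine Finset.sum_congr rfl fun s hs => ?_
  rw [euler_monomial]
  have hdeg : s.degree = d := by
    rw [Finsupp.degree_eq_weight_one]; exact hp (mem_support_iff.mp hs)
  rw [hdeg, smul_monomial, nsmul_eq_mul, mul_comm]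

lemma isHomogeneous_pderiv {p : MvPolynomial (Fin N) R} {d : ℕ}
    (hp : p.IsHomogeneous d) (i : Fin N) : (pderiv i p).IsHomogeneous (d - 1) := by
  rw [p.as_sum, map_sum]
  apply IsHomogeneous.sum
  intro s hs
  rw [pderiv_monomial]
  by_cases h : s i = 0
  · simp [h, isHomogeneous_zero]
  · apply isHomogeneous_monomial
    have hdeg : s.degree = d := by
      rw [Finsupp.degree_eq_weight_one]; exact hp (mem_support_iff.mp hs)
    rw [← degree_fin] at hdeg ⊢
    rw [Finset.sum_congr rfl (fun j _ => Finsupp.tsub_apply s _ j)]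
    have e1 : (∑ j : Fin N, (s j - (Finsupp.single i 1) j))
        = (s i - (Finsupp.single i 1) i) + ∑ j ∈ Finset.univ.erase i, (s j - (Finsupp.single i 1) j) :=
      (Finset.add_sum_erase _ _ (Finset.mem_univ i)).symm
    have e2 : (∑ j : Fin N, s j) = s i + ∑ j ∈ Finset.univ.erase i, s j :=
      (Finset.add_sum_erase _ _ (Finset.mem_univ i)).symm
    have e3 : ∀ j ∈ Finset.univ.erase i, s j - (Finsupp.single i 1) j = s j := by
      intro j hj
      rw [Finsupp.single_apply, if_neg (Ne.symm (Finset.mem_erase.mp hj).1)]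
      omega
    have e4 : ∑ j ∈ Finset.univ.erase i, (s j - (Finsupp.single i 1) j)
        = ∑ j ∈ Finset.univ.erase i, s j := Finset.sum_congr rfl e3
    have e5 : (Finsupp.single i 1 : Fin N →₀ ℕ) i = 1 := Finsupp.single_eq_same
    omega

lemma isHomogeneous_lap {p : MvPolynomial (Fin N) R} {d : ℕ}
    (hp : p.IsHomogeneous d) : (lap p).IsHomogeneous (d - 2) := by
  apply IsHomogeneous.sum
  intro l _
  have := isHomogeneous_pderiv (isHomogeneous_pderiv hp l) l
  simpa [Nat.sub_sub] using this

lemma pderiv_XX (k : Fin N) : pderiv k (XX R N) = 2 * X k := by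
  rw [XX, map_sum]
  rw [Finset.sum_eq_single k]
  · rw [pderiv_pow, pderiv_X_self]; ring
  · intro j _ hj
    rw [pderiv_pow, pderiv_X_of_ne hj]; ring
  · intro h; exact absurd (Finset.mem_univ k) h

lemma rot_C_mul (j k : Fin N) (a : R) (p : MvPolynomial (Fin N) R) :
    rot j k (C a * p) = C a * rot j k p := by
  simp only [rot, pderiv_C_mul]; ring

lemma rot_XX_pow (j k : Fin N) (n : ℕ) : rot j k ((XX R N) ^ n) = 0 := by
  simp only [rot, pderiv_pow, pderiv_XX]; ring

lemma rot_sum {ι : Type*} (s : Finset ι) (f : ι → MvPolynomial (Fin N) R) (j k : Fin N) :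
    rot j k (∑ i ∈ s, f i) = ∑ i ∈ s, rot j k (f i) := by
  simp only [rot, map_sum, Finset.mul_sum, Finset.sum_sub_distrib]

lemma lap_sub (p q : MvPolynomial (Fin N) R) : lap (p - q) = lap p - lap q := by
  simp only [lap, map_sub, Finset.sum_sub_distrib]

lemma pderiv_X_mul (l j : Fin N) (q : MvPolynomial (Fin N) R) :
    pderiv l (X j * q) = (if l = j then q else 0) + X j * pderiv l q := by
  rw [pderiv_mul]
  by_cases h : l = j
  · subst h; rw [pderiv_X_self, if_pos rfl, one_mul]
  · rw [pderiv_X_of_ne (Ne.symm h), if_neg h, zero_mul]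

lemma lap_X_mul (j : Fin N) (q : MvPolynomial (Fin N) R) :
    lap (X j * q) = 2 • pderiv j q + X j * lap q := by
  unfold lap
  have : ∀ l : Fin N, pderiv l (pderiv l (X j * q))
      = (if l = j then 2 • pderiv l q else 0) + X j * pderiv l (pderiv l q) := by
    intro l
    rw [pderiv_X_mul, map_add, pderiv_X_mul, apply_ite (pderiv l), map_zero]
    by_cases h : l = j
    · subst h; rw [if_pos rfl, if_pos rfl, two_smul]; ring
    · rw [if_neg h, if_neg h]; ring
  rw [Finset.sum_congr rfl fun l _ => this l, Finset.sum_add_distrib,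
    Finset.sum_ite_eq' Finset.univ j (fun l => 2 • pderiv l q), if_pos (Finset.mem_univ j),
    ← Finset.mul_sum]

lemma lap_pderiv (k : Fin N) (p : MvPolynomial (Fin N) R) :
    lap (pderiv k p) = pderiv k (lap p) := by
  unfold lap
  rw [map_sum]
  refine Finset.sum_congr rfl fun l _ => ?_
  rw [pderiv_comm' l k p, pderiv_comm' l k (pderiv l p)]

lemma rot_lap (j k : Fin N) (p : MvPolynomial (Fin N) R) :
    lap (rot j k p) = rot j k (lap p) := by
  rw [rot, lap_sub, lap_X_mul, lap_X_mul, rot, lap_pderiv, lap_pderiv,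
    pderiv_comm' j k p]
  abel

lemma nsmul_eq_C_mul (n : ℕ) (q : MvPolynomial (Fin N) R) :
    n • q = C (n : R) * q := by
  rw [nsmul_eq_mul]
  rw [(map_natCast (C : R →+* MvPolynomial (Fin N) R) n)]

lemma key1 {p : MvPolynomial (Fin N) R} {d : ℕ} (hp : p.IsHomogeneous d)
    (hrot : ∀ j k : Fin N, j ≠ k → rot j k p = 0) (k : Fin N) :
    XX R N * pderiv k p = d • (X k * p) := by
  rw [XX, Finset.sum_mul]
  have step : ∀ j : Fin N, X j ^ 2 * pderiv k p = X k * (X j * pderiv j p) := by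
    intro j
    by_cases h : j = k
    · subst h; ring
    · have h0 : X j * pderiv k p = X k * pderiv j p := by
        have h2 := hrot j k h
        rw [rot, sub_eq_zero] at h2
        exact h2
      calc X j ^ 2 * pderiv k p = X j * (X j * pderiv k p) := by ring
        _ = X j * (X k * pderiv j p) := by rw [h0]
        _ = X k * (X j * pderiv j p) := by ring
  rw [Finset.sum_congr rfl fun j _ => step j, ← Finset.mul_sum, euler_s2 hp, mul_smul_comm]

lemma key2 {p : MvPolynomial (Fin N) R} {d : ℕ} (hp : p.IsHomogeneous d)
    (hrot : ∀ j k : Fin N, j ≠ k → rot j k p = 0) :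
    XX R N * lap p + C ((2 * d : ℕ) : R) * p = C ((d * N + d * d : ℕ) : R) * p := by
  have h1 : ∑ k : Fin N, pderiv k (XX R N * pderiv k p)
      = ∑ k : Fin N, pderiv k (d • (X k * p)) :=
    Finset.sum_congr rfl fun k _ => congrArg _ (key1 hp hrot k)
  have lhs : ∑ k : Fin N, pderiv k (XX R N * pderiv k p)
      = C ((2 * d : ℕ) : R) * p + XX R N * lap p := by
    have step : ∀ k : Fin N, pderiv k (XX R N * pderiv k p)
        = 2 * (X k * pderiv k p) + XX R N * pderiv k (pderiv k p) := by
      intro k; rw [pderiv_mul, pderiv_XX]; ring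
    rw [Finset.sum_congr rfl fun k _ => step k, Finset.sum_add_distrib, ← Finset.mul_sum,
      ← Finset.mul_sum, euler_s2 hp, lap, nsmul_eq_C_mul]
    simp only [Nat.cast_mul, Nat.cast_add, Nat.cast_ofNat, map_mul, map_add, map_ofNat]
    ring
  have rhs : ∑ k : Fin N, pderiv k (d • (X k * p)) = C ((d * N + d * d : ℕ) : R) * p := by
    have step : ∀ k : Fin N, pderiv k (d • (X k * p)) = d • (p + X k * pderiv k p) := by
      intro k
      rw [map_nsmul, pderiv_mul, pderiv_X_self, one_mul]
    rw [Finset.sum_congr rfl fun k _ => step k, ← Finset.smul_sum, Finset.sum_add_distrib,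
      Finset.sum_const, euler_s2 hp, Finset.card_univ, Fintype.card_fin,
      nsmul_eq_C_mul, nsmul_eq_C_mul, nsmul_eq_C_mul]
    simp only [Nat.cast_mul, Nat.cast_add, Nat.cast_ofNat, map_mul, map_add, map_ofNat]
    ring
  rw [lhs, rhs] at h1
  rw [← h1]
  ring

lemma cancel_nat (hR : ∀ n : ℕ, 0 < n → (n : R) ∈ nonZeroDivisors R)
    {n : ℕ} (hn : 0 < n) {f : MvPolynomial (Fin N) R}
    (h : C ((n : ℕ) : R) * f = 0) : f = 0 := by
  ext m
  have := congrArg (coeff m) h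
  rw [coeff_C_mul, coeff_zero] at this
  have h2 := hR n hn
  rw [mem_nonZeroDivisors_iff] at h2
  have := h2.2 (coeff m f) (by rwa [mul_comm] at this)
  simpa using this

lemma coeff_XX_pow (i : Fin N) (n : ℕ) :
    coeff (Finsupp.single i (2 * n)) (XX R N ^ n) = 1 := by
  induction n with
  | zero => simp
  | succ n ih =>
    rw [pow_succ, mul_comm (XX R N ^ n)]
    nth_rewrite 1 [XX]
    rw [Finset.sum_mul, coeff_sum]
    rw [Finset.sum_eq_single i]
    · have e1 : (Finsupp.single i (2 * (n+1)) : Fin N →₀ ℕ)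
          = Finsupp.single i 1 + (Finsupp.single i 1 + Finsupp.single i (2 * n)) := by
        ext b; simp [Finsupp.single_apply]; split <;> omega
      rw [e1, pow_two, mul_assoc, coeff_X_mul, coeff_X_mul, ih]
    · intro j _ hj
      rw [pow_two, mul_assoc, coeff_X_mul']
      rw [if_neg]
      simp [Finsupp.single_apply, Ne.symm hj]
    · intro h; exact absurd (Finset.mem_univ i) h

lemma isHomogeneous_zero_eq_C {p : MvPolynomial (Fin N) R} (hp : p.IsHomogeneous 0) :
    p = C (coeff 0 p) := by
  have h1 := homogeneousComponent_of_mem (n := 0) (m := 0)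
    ((mem_homogeneousSubmodule 0 p).mpr hp)
  rw [if_pos rfl] at h1
  conv_lhs => rw [← h1]
  rw [homogeneousComponent_zero]

lemma pderiv_of_homog0 {p : MvPolynomial (Fin N) R} (hp : p.IsHomogeneous 0) (i : Fin N) :
    pderiv i p = 0 := by
  rw [show p = C (coeff 0 p) from isHomogeneous_zero_eq_C hp]
  exact pderiv_C

lemma rot_isHomogeneous {p : MvPolynomial (Fin N) R} {n : ℕ} (hp : p.IsHomogeneous n)
    (j k : Fin N) : (rot j k p).IsHomogeneous n := by
  cases n with
  | zero =>
    rw [rot, pderiv_of_homog0 hp, pderiv_of_homog0 hp]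
    simpa using isHomogeneous_zero (σ := Fin N) (R := R) 0
  | succ m =>
    apply IsHomogeneous.sub
    · have h1 : (pderiv k p).IsHomogeneous m := by simpa using isHomogeneous_pderiv hp k
      simpa [Nat.add_comm] using (isHomogeneous_X R j).mul h1
    · have h1 : (pderiv j p).IsHomogeneous m := by simpa using isHomogeneous_pderiv hp j
      simpa [Nat.add_comm] using (isHomogeneous_X R k).mul h1

lemma lap_zero : lap (0 : MvPolynomial (Fin N) R) = 0 := by simp [lap]

lemma homog_rot_inv (hN : 2 ≤ N)
    (hR : ∀ n : ℕ, 0 < n → (n : R) ∈ nonZeroDivisors R) :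
    ∀ d : ℕ, ∀ p : MvPolynomial (Fin N) R, p.IsHomogeneous d →
      (∀ j k : Fin N, j ≠ k → rot j k p = 0) →
      (∃ c : R, p = C c * XX R N ^ (d / 2)) ∧ (¬ Even d → p = 0) := by
  intro d
  induction d using Nat.strong_induction_on with
  | _ d IH =>
  intro p hp hrot
  rcases Nat.lt_or_ge d 2 with hd | hd
  · interval_cases d
    · refine ⟨⟨coeff 0 p, ?_⟩, fun h => absurd Even.zero h⟩
      rw [pow_zero, mul_one]
      exact isHomogeneous_zero_eq_C hp
    · -- d = 1
      have hlap : lap p = 0 := by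
        unfold lap
        apply Finset.sum_eq_zero
        intro l _
        have h1 : (pderiv l p).IsHomogeneous 0 := by simpa using isHomogeneous_pderiv hp l
        rw [pderiv_of_homog0 h1]
      have hk := key2 hp hrot
      rw [hlap, mul_zero, zero_add] at hk
      have harith : 1 * N + 1 * 1 = 2 * 1 + (N - 1) := by omega
      rw [show ((1 * N + 1 * 1 : ℕ) : R) = ((2 * 1 : ℕ) : R) + ((N - 1 : ℕ) : R) from by
        rw [← Nat.cast_add, ← harith], map_add, add_mul] at hk
      have h0 : C ((N - 1 : ℕ) : R) * p = 0 := by linear_combination -hk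
      have hp0 := cancel_nat hR (by omega : 0 < N - 1) h0
      exact ⟨⟨0, by simp [hp0]⟩, fun _ => hp0⟩
  · -- d ≥ 2
    have hlaph := isHomogeneous_lap hp
    have hlrot : ∀ j k : Fin N, j ≠ k → rot j k (lap p) = 0 := by
      intro j k h
      rw [← rot_lap, hrot j k h, lap_zero]
    obtain ⟨⟨c', hc'⟩, hodd'⟩ := IH (d - 2) (by omega) (lap p) hlaph hlrot
    have h2d : 2 * d ≤ d * N := by
      calc 2 * d = d * 2 := by ring
        _ ≤ d * N := Nat.mul_le_mul_left d hN
    set m := d * N + d * d - 2 * d with hm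
    have hm0 : 0 < m := by
      have h4 : 2 * 2 ≤ d * d := Nat.mul_le_mul hd hd
      omega
    have harith : d * N + d * d = 2 * d + m := by omega
    have hk := key2 hp hrot
    rw [show ((d * N + d * d : ℕ) : R) = ((2 * d : ℕ) : R) + ((m : ℕ) : R) from by
      rw [← Nat.cast_add, ← harith], map_add, add_mul] at hk
    by_cases he : Even d
    · have hexp : (d - 2) / 2 + 1 = d / 2 := by
        obtain ⟨t, ht⟩ := he; omega
      rw [hc'] at hk
      have hk2 : C c' * XX R N ^ (d / 2) = C ((m : ℕ) : R) * p := by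
        rw [← hexp, pow_succ]
        linear_combination hk
      have i0 : Fin N := ⟨0, by omega⟩
      set a := coeff (Finsupp.single i0 d) p with ha
      have hceq : c' = ((m : ℕ) : R) * a := by
        have hco := congrArg (coeff (Finsupp.single i0 d)) hk2
        have hx : coeff (Finsupp.single i0 d) (XX R N ^ (d / 2)) = 1 := by
          have h2s : Finsupp.single i0 d = Finsupp.single i0 (2 * (d / 2)) := by
            congr 1
            obtain ⟨t, ht⟩ := he; omega
          rw [h2s, coeff_XX_pow]
        rw [coeff_C_mul, coeff_C_mul, hx, mul_one] at hco
        exact hco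
      rw [hceq, map_mul] at hk2
      have hz : C ((m : ℕ) : R) * (p - C a * XX R N ^ (d / 2)) = 0 := by
        linear_combination -hk2
      have hfin := cancel_nat hR hm0 hz
      exact ⟨⟨a, (sub_eq_zero.mp hfin)⟩, fun h => absurd he h⟩
    · have hodd2 : ¬ Even (d - 2) := by
        intro h
        obtain ⟨t, ht⟩ := h
        exact he ⟨t + 1, by omega⟩
      have hl0 : lap p = 0 := hodd' hodd2
      rw [hl0, mul_zero, zero_add] at hk
      have h0 : C ((m : ℕ) : R) * p = 0 := by linear_combination -hk
      have hp0 := cancel_nat hR hm0 h0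
      exact ⟨⟨0, by simp [hp0]⟩, fun _ => hp0⟩

lemma rot_add (j k : Fin N) (a b : MvPolynomial (Fin N) R) :
    rot j k (a + b) = rot j k a + rot j k b := by
  simp only [rot, map_add]; ring

lemma rot_aeval (q : Polynomial R) (j k : Fin N) :
    rot j k (Polynomial.aeval (XX R N) q : MvPolynomial (Fin N) R) = 0 := by
  induction q using Polynomial.induction_on' with
  | add a b ha hb => rw [map_add, rot_add, ha, hb, add_zero]
  | monomial n a =>
    rw [Polynomial.aeval_monomial, algebraMap_eq, rot_C_mul, rot_XX_pow, mul_zero]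

lemma rot_hC {p : MvPolynomial (Fin N) R}
    (hrot : ∀ j k : Fin N, j ≠ k → rot j k p = 0) (n : ℕ) (j k : Fin N) (hjk : j ≠ k) :
    rot j k (homogeneousComponent n p) = 0 := by
  by_cases hn : n ≤ p.totalDegree
  · have h0 : ∑ i ∈ Finset.range (p.totalDegree + 1), rot j k (homogeneousComponent i p) = 0 := by
      rw [← rot_sum, sum_homogeneousComponent, hrot j k hjk]
    have h1 := congrArg (homogeneousComponent n) h0
    rw [map_sum, map_zero] at h1
    have h2 : ∀ i ∈ Finset.range (p.totalDegree + 1),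
        homogeneousComponent n (rot j k (homogeneousComponent i p))
          = if n = i then rot j k (homogeneousComponent i p) else 0 := by
      intro i _
      exact homogeneousComponent_of_mem ((mem_homogeneousSubmodule i _).mpr
        (rot_isHomogeneous (homogeneousComponent_isHomogeneous i p) j k))
    rw [Finset.sum_congr rfl h2, Finset.sum_ite_eq (Finset.range (p.totalDegree + 1)) n,
      if_pos (Finset.mem_range.mpr (by omega))] at h1
    exact h1
  · rw [homogeneousComponent_eq_zero n p (by omega)]
    simp [rot]

end Aux

/-- over a ring in which positive integer multiples of `1` are not zero
divisors, `p` is annihilated by all rotation generators iff it is a one-variable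
polynomial evaluated at `X·X`; moreover a nonzero homogeneous such `p` of degree `d`
has `d` even and `p = c·(X·X)^{d/2}`. -/
theorem stmt2 {R : Type*} [CommRing R] {N : ℕ} (hN : 2 ≤ N)
    (hR : ∀ n : ℕ, 0 < n → (n : R) ∈ nonZeroDivisors R)
    (p : MvPolynomial (Fin N) R) :
    ((∀ j k : Fin N, j ≠ k → rot j k p = 0) ↔
      ∃ q : Polynomial R, p = Polynomial.aeval (XX R N) q) ∧
    (∀ d : ℕ, p ≠ 0 → p.IsHomogeneous d →
      (∀ j k : Fin N, j ≠ k → rot j k p = 0) →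
      Even d ∧ ∃ c : R, p = C c * XX R N ^ (d / 2)) := by
  constructor
  · constructor
    · intro hrot
      have key : ∀ n : ℕ, ∃ c : R, homogeneousComponent n p = C c * XX R N ^ (n / 2) := by
        intro n
        obtain ⟨⟨c, hc⟩, _⟩ := homog_rot_inv hN hR n (homogeneousComponent n p)
          (homogeneousComponent_isHomogeneous n p) (fun j k h => rot_hC hrot n j k h)
        exact ⟨c, hc⟩
      choose c hc using key
      refine ⟨∑ n ∈ Finset.range (p.totalDegree + 1), Polynomial.monomial (n / 2) (c n), ?_⟩
      rw [map_sum]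
      conv_lhs => rw [← sum_homogeneousComponent p]
      refine Finset.sum_congr rfl fun n _ => ?_
      rw [hc n, Polynomial.aeval_monomial, algebraMap_eq]
    · rintro ⟨q, rfl⟩ j k _
      exact rot_aeval q j k
  · intro d hp0 hphom hrot
    obtain ⟨⟨c, hc⟩, hodd⟩ := homog_rot_inv hN hR d p hphom hrot
    refine ⟨?_, c, hc⟩
    by_contra h
    exact hp0 (hodd h)
end

section
/- Suppose that for every positive integer n, n·1_R is not a zero divisor in R, and let c ∈ R. If p ∈ R[X_1,…,X_N] is harmonic (Δp = 0) and p is a multiple of X·X − c (i.e., p = (X·X − c)·q for some q ∈ R[X_1,…,X_N]), then p = 0. -/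
open MvPolynomial

section Aux
variable {R : Type*} [CommRing R] {N : ℕ}

noncomputable def eul (f : MvPolynomial (Fin N) R) : MvPolynomial (Fin N) R :=
  ∑ j, X j * pderiv j f

lemma degree_eq_sum_univ (s : Fin N →₀ ℕ) : s.degree = ∑ j, s j := by
  rw [Finsupp.degree]
  exact Finset.sum_subset (Finset.subset_univ _)
    (fun i _ hi => Finsupp.notMem_support_iff.mp hi)

lemma single_add_tsub (s : Fin N →₀ ℕ) (j : Fin N) (h : s j ≠ 0) :
    Finsupp.single j 1 + (s - Finsupp.single j 1) = s := by
  ext i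
  rcases eq_or_ne i j with rfl | hij
  · simp only [Finsupp.add_apply, Finsupp.tsub_apply, Finsupp.single_eq_same]
    omega
  · simp [Finsupp.single_eq_of_ne' (Ne.symm hij)]

lemma X_mul_pderiv_monomial (s : Fin N →₀ ℕ) (a : R) (j : Fin N) :
    X j * pderiv j (monomial s a) = (s j) • monomial s a := by
  rw [pderiv_monomial]
  by_cases h : s j = 0
  · simp [h]
  · rw [X, monomial_mul, single_add_tsub s j h, one_mul, smul_monomial]
    congr 1
    rw [nsmul_eq_mul, mul_comm]

lemma eul_monomial (s : Fin N →₀ ℕ) (a : R) :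
    eul (monomial s a) = s.degree • monomial s a := by
  rw [eul]
  simp_rw [_root_.X_mul_pderiv_monomial, ← Finset.sum_smul, ← degree_eq_sum_univ]

lemma eul_add (f g : MvPolynomial (Fin N) R) : eul (f + g) = eul f + eul g := by
  simp [eul, mul_add, Finset.sum_add_distrib]


lemma degree_add' (a b : Fin N →₀ ℕ) : (a + b).degree = a.degree + b.degree := by
  simp [degree_eq_sum_univ, Finset.sum_add_distrib]

lemma degree_single' (j : Fin N) (n : ℕ) : (Finsupp.single j n).degree = n := by
  simp [degree_eq_sum_univ, Finsupp.single_apply]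

lemma hc_monomial (n : ℕ) (s : Fin N →₀ ℕ) (a : R) :
    homogeneousComponent n (monomial s a) =
      if s.degree = n then monomial s a else 0 := by
  ext d
  rw [coeff_homogeneousComponent]
  rcases eq_or_ne d s with rfl | hds
  · by_cases h : d.degree = n <;> simp [h]
  · by_cases h : d.degree = n <;> by_cases h2 : s.degree = n <;>
      simp [h, h2, coeff_monomial, Ne.symm hds]

lemma degree_tsub_single (s : Fin N →₀ ℕ) (j : Fin N) (h : s j ≠ 0) :
    (s - Finsupp.single j 1).degree + 1 = s.degree := by
  conv_rhs => rw [← single_add_tsub s j h]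
  rw [degree_add', degree_single']
  omega

lemma hc_pderiv (n : ℕ) (j : Fin N) (f : MvPolynomial (Fin N) R) :
    homogeneousComponent n (pderiv j f) =
      pderiv j (homogeneousComponent (n + 1) f) := by
  induction f using MvPolynomial.induction_on' with
  | monomial s a =>
    rw [pderiv_monomial, hc_monomial, hc_monomial]
    by_cases h : s j = 0
    · by_cases h2 : s.degree = n + 1 <;> simp [h, h2]
    · have hd := degree_tsub_single s j h
      by_cases h2 : s.degree = n + 1
      · rw [if_pos (by omega), if_pos h2, pderiv_monomial]
      · rw [if_neg (by omega), if_neg h2, map_zero]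
  | add p q hp hq => simp [map_add, hp, hq]



lemma hc_eul (n : ℕ) (f : MvPolynomial (Fin N) R) :
    homogeneousComponent n (eul f) = n • homogeneousComponent n f := by
  induction f using MvPolynomial.induction_on' with
  | monomial s a =>
    rw [eul_monomial, map_nsmul, hc_monomial]
    by_cases h : s.degree = n
    · rw [h]
    · simp [h]
  | add p q hp hq => rw [eul_add, map_add, hp, hq, map_add, smul_add]

lemma lap_sum {ι : Type*} (s : Finset ι) (f : ι → MvPolynomial (Fin N) R) :
    lap (∑ i ∈ s, f i) = ∑ i ∈ s, lap (f i) := by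
  simp only [lap, map_sum]
  exact Finset.sum_comm

lemma hc_lap (n : ℕ) (f : MvPolynomial (Fin N) R) :
    homogeneousComponent n (lap f) = lap (homogeneousComponent (n + 2) f) := by
  simp only [lap, map_sum, hc_pderiv]

lemma hc_homog_mul (g : MvPolynomial (Fin N) R) (k : ℕ) (hg : g.IsHomogeneous k)
    (f : MvPolynomial (Fin N) R) (n : ℕ) :
    homogeneousComponent (n + k) (g * f) = g * homogeneousComponent n f := by
  induction f using MvPolynomial.induction_on' with
  | monomial s a =>
    have hmem : g * monomial s a ∈ homogeneousSubmodule (Fin N) R (k + s.degree) :=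
      (mem_homogeneousSubmodule _ _).2 (hg.mul (isHomogeneous_monomial a rfl))
    rw [homogeneousComponent_of_mem hmem, hc_monomial]
    by_cases h : s.degree = n
    · rw [if_pos (by omega), if_pos h]
    · rw [if_neg (by omega), if_neg h, mul_zero]
  | add p q hp hq => rw [mul_add, map_add, hp, hq, map_add, mul_add]

lemma eul_sum {ι : Type*} (s : Finset ι) (f : ι → MvPolynomial (Fin N) R) :
    eul (∑ i ∈ s, f i) = ∑ i ∈ s, eul (f i) := by
  classical
  induction s using Finset.induction_on with
  | empty => simp [eul]
  | insert a s h ih => rw [Finset.sum_insert h, eul_add, ih, Finset.sum_insert h]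

lemma euler_s5 (f : MvPolynomial (Fin N) R) (n : ℕ) (hf : f.IsHomogeneous n) :
    eul f = n • f := by
  have h1 : eul f = ∑ d ∈ f.support, n • monomial d (coeff d f) := by
    conv_lhs => rw [f.as_sum]
    rw [eul_sum]
    refine Finset.sum_congr rfl fun d hd => ?_
    rw [eul_monomial]
    congr 1
    have := hf (mem_support_iff.mp hd)
    rw [Finsupp.degree_eq_weight_one]; exact this
  rw [h1, ← Finset.smul_sum, ← f.as_sum]

lemma pderiv_isHomogeneous {f : MvPolynomial (Fin N) R} {n : ℕ} (j : Fin N)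
    (hf : f.IsHomogeneous n) : (pderiv j f).IsHomogeneous (n - 1) := by
  have hfeq : homogeneousComponent n f = f :=
    (homogeneousComponent_of_mem ((mem_homogeneousSubmodule _ _).2 hf)).trans (if_pos rfl)
  rcases Nat.eq_zero_or_pos n with rfl | hn
  · rw [← hfeq, homogeneousComponent_zero, pderiv_C]
    exact isHomogeneous_zero _ _ _
  · have : homogeneousComponent (n - 1) (pderiv j f) = pderiv j f := by
      rw [hc_pderiv, Nat.sub_add_cancel hn, hfeq]
    rw [← this]
    exact homogeneousComponent_isHomogeneous _ _

lemma pderiv_eq_zero_of_isHomogeneous_zero {f : MvPolynomial (Fin N) R} (j : Fin N)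
    (hf : f.IsHomogeneous 0) : pderiv j f = 0 := by
  have hfeq : homogeneousComponent 0 f = f :=
    (homogeneousComponent_of_mem ((mem_homogeneousSubmodule _ _).2 hf)).trans (if_pos rfl)
  rw [← hfeq, homogeneousComponent_zero, pderiv_C]

lemma lap_isHomogeneous {f : MvPolynomial (Fin N) R} {n : ℕ}
    (hf : f.IsHomogeneous n) : (lap f).IsHomogeneous (n - 2) := by
  refine IsHomogeneous.sum _ _ _ fun j _ => ?_
  have := pderiv_isHomogeneous j (pderiv_isHomogeneous j hf)
  rwa [show n - 1 - 1 = n - 2 by omega] at this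

lemma lap_eq_zero_of_le_one {f : MvPolynomial (Fin N) R} {n : ℕ}
    (hf : f.IsHomogeneous n) (hn : n ≤ 1) : lap f = 0 := by
  refine Finset.sum_eq_zero fun j _ => ?_
  rcases Nat.le_one_iff_eq_zero_or_eq_one.mp hn with rfl | rfl
  · rw [pderiv_eq_zero_of_isHomogeneous_zero j hf, map_zero]
  · exact pderiv_eq_zero_of_isHomogeneous_zero j (by simpa using pderiv_isHomogeneous j hf)

lemma smul_cancel {b : ℕ} (hb : (b : R) ∈ nonZeroDivisors R)
    {f : MvPolynomial (Fin N) R} (h : b • f = 0) : f = 0 := by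
  ext d
  have h2 : coeff d f * (b : R) = 0 := by
    have := congrArg (coeff d) h
    rw [coeff_smul, coeff_zero, nsmul_eq_mul] at this
    rw [mul_comm]
    exact this
  simpa using (mem_nonZeroDivisors_iff_right.mp hb) _ h2

lemma hc_totalDegree_ne_zero {f : MvPolynomial (Fin N) R} (hf : f ≠ 0) :
    homogeneousComponent f.totalDegree f ≠ 0 := by
  obtain ⟨d, hd, hdeg⟩ := Finset.exists_mem_eq_sup f.support
    (support_nonempty.mpr hf) (fun s => s.sum fun _ e => e)
  intro h0
  have : coeff d (homogeneousComponent f.totalDegree f) = coeff d f := by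
    rw [coeff_homogeneousComponent, if_pos]
    rw [Finsupp.degree, totalDegree, hdeg]
    rfl
  rw [h0, coeff_zero] at this
  exact mem_support_iff.mp hd this.symm

lemma lap_mul (f g : MvPolynomial (Fin N) R) :
    lap (f * g) = lap f * g + 2 • (∑ j, pderiv j f * pderiv j g) + f * lap g := by
  simp only [lap, pderiv_mul, map_add, Finset.sum_add_distrib, Finset.sum_mul,
    Finset.mul_sum, two_smul]
  abel

lemma pderiv_XXc (c : R) (j : Fin N) : pderiv j (XX R N - C c) = 2 * X j := by
  rw [map_sub, pderiv_C, sub_zero, XX, map_sum]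
  rw [Finset.sum_eq_single j (fun i _ hij => by simp [pderiv_pow, pderiv_X_of_ne hij])
    (fun h => absurd (Finset.mem_univ j) h)]
  simp [pderiv_pow]

lemma lap_XXc (c : R) :
    lap (XX R N - C c) = (2 * N) • (1 : MvPolynomial (Fin N) R) := by
  rw [lap]
  simp_rw [pderiv_XXc]
  have h1 : ∀ j : Fin N, pderiv j (2 * X j : MvPolynomial (Fin N) R) = 2 := by
    intro j
    rw [pderiv_mul, pderiv_X_self, mul_one,
      ← map_ofNat (C : R →+* MvPolynomial (Fin N) R) 2, pderiv_C, zero_mul, zero_add]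
  simp_rw [h1]
  rw [Finset.sum_const, Finset.card_univ, Fintype.card_fin]
  simp [nsmul_eq_mul]
  push_cast
  ring

lemma key1_s5 (c : R) (g : MvPolynomial (Fin N) R) :
    lap ((XX R N - C c) * g) =
      (2 * N) • g + 4 • eul g + (XX R N - C c) * lap g := by
  rw [lap_mul, lap_XXc, smul_mul_assoc, one_mul]
  congr 1
  congr 1
  simp_rw [pderiv_XXc]
  have h2 : (∑ j, 2 * X j * pderiv j g) = 2 * eul g := by
    rw [eul, Finset.mul_sum]
    exact Finset.sum_congr rfl fun j _ => mul_assoc _ _ _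
  rw [h2, show (2 : MvPolynomial (Fin N) R) * eul g = 2 • eul g by
    rw [nsmul_eq_mul]; norm_num, smul_smul]
  norm_num

lemma lap_nsmul (b : ℕ) (f : MvPolynomial (Fin N) R) :
    lap (b • f) = b • lap f := by
  simp [lap, map_nsmul, Finset.smul_sum]

lemma lap_add (f g : MvPolynomial (Fin N) R) : lap (f + g) = lap f + lap g := by
  simp [lap, Finset.sum_add_distrib]



lemma key1' (g : MvPolynomial (Fin N) R) :
    lap (XX R N * g) = (2 * N) • g + 4 • eul g + XX R N * lap g := by
  have := key1_s5 (0 : R) g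
  rwa [map_zero, sub_zero] at this

lemma engine (hR : ∀ n : ℕ, 0 < n → (n : R) ∈ nonZeroDivisors R) (d : ℕ) :
    ∀ f : MvPolynomial (Fin N) R, f.IsHomogeneous d →
    ∀ b : ℕ, 0 < b → b • f + XX R N * lap f = 0 → f = 0 := by
  induction d using Nat.strong_induction_on with
  | _ d ih =>
  intro f hf b hb hrel
  rcases le_or_gt d 1 with hd | hd
  · rw [lap_eq_zero_of_le_one hf hd, mul_zero, add_zero] at hrel
    exact smul_cancel (hR b hb) hrel
  · have hgh : (lap f).IsHomogeneous (d - 2) := lap_isHomogeneous hf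
    have h2 : b • lap f + lap (XX R N * lap f) = 0 := by
      have h := congrArg lap hrel
      rwa [lap_add, lap_nsmul, show lap (0 : MvPolynomial (Fin N) R) = 0 by
        simp [lap]] at h
    rw [key1', euler_s5 _ _ hgh] at h2
    have h3 : (b + 2 * N + 4 * (d - 2)) • lap f + XX R N * lap (lap f) = 0 := by
      rw [smul_smul] at h2
      rw [add_smul, add_smul, ← h2]
      abel
    have hz : lap f = 0 := ih (d - 2) (by omega) _ hgh _ (by omega) h3
    rw [hz, mul_zero, add_zero] at hrel
    exact smul_cancel (hR b hb) hrel

lemma XX_isHomogeneous : (XX R N).IsHomogeneous 2 :=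
  IsHomogeneous.sum _ _ _ fun j _ => isHomogeneous_X_pow _ _

lemma lap_eq_zero_of_totalDegree_le_one {f : MvPolynomial (Fin N) R}
    (hf : f.totalDegree ≤ 1) : lap f = 0 := by
  conv_lhs => rw [← f.sum_homogeneousComponent]
  rw [lap_sum]
  refine Finset.sum_eq_zero fun i hi => ?_
  exact lap_eq_zero_of_le_one (homogeneousComponent_isHomogeneous i f)
    (by have := Finset.mem_range.mp hi; omega)


end Aux

/-- if positive integer multiples of `1_R` are not zero divisors, the only
harmonic multiple of `X·X − c` is `0`. -/
theorem stmt5 {R : Type*} [CommRing R] {N : ℕ} (hN : 2 ≤ N)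
    (hR : ∀ n : ℕ, 0 < n → (n : R) ∈ nonZeroDivisors R)
    (c : R) (p : MvPolynomial (Fin N) R) (hharm : lap p = 0)
    (hdvd : ∃ q : MvPolynomial (Fin N) R, p = (XX R N - C c) * q) :
    p = 0 := by
  obtain ⟨q, rfl⟩ := hdvd
  suffices hq : q = 0 by rw [hq, mul_zero]
  by_contra hq0
  obtain ⟨m, hm⟩ : ∃ m, q.totalDegree = m := ⟨_, rfl⟩
  have hrel : (2 * N) • q + 4 • eul q + (XX R N - C c) * lap q = 0 := by
    rw [← key1_s5 c q, hharm]
  have h0 := congrArg (homogeneousComponent m) hrel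
  rw [map_add, map_add, map_zero, map_nsmul, map_nsmul, hc_eul, sub_mul, map_sub,
    homogeneousComponent_C_mul, hc_lap,
    homogeneousComponent_eq_zero (m + 2) q (by omega),
    show lap (0 : MvPolynomial (Fin N) R) = 0 by simp [lap], mul_zero, sub_zero] at h0
  -- h0 : (2*N) • Q + 4 • (m • Q) + hc m (XX * lap q) = 0
  have hXm : homogeneousComponent m (XX R N * lap q)
      = XX R N * lap (homogeneousComponent m q) := by
    rcases le_or_gt m 1 with hm1 | hm1
    · rw [lap_eq_zero_of_totalDegree_le_one (f := q) (hm ▸ hm1), mul_zero, map_zero,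
        lap_eq_zero_of_le_one (homogeneousComponent_isHomogeneous m q) hm1, mul_zero]
    · obtain ⟨k, rfl⟩ : ∃ k, m = k + 2 := ⟨m - 2, by omega⟩
      rw [hc_homog_mul (XX R N) 2 XX_isHomogeneous (lap q) k, hc_lap]
  rw [hXm] at h0
  have h1 : (2 * N + 4 * m) • homogeneousComponent m q
      + XX R N * lap (homogeneousComponent m q) = 0 := by
    rw [smul_smul] at h0
    rw [add_smul, ← h0]
  have hz := engine hR m _ (homogeneousComponent_isHomogeneous m q) (2 * N + 4 * m) (by omega) h1
  exact hc_totalDegree_ne_zero hq0 (by rw [hm]; exact hz)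
end

section
/- Suppose R contains ℚ (R is a ℚ-algebra). Then every polynomial p ∈ R[X_1,…,X_N] has a unique expression p = Σ_{j≥0} (X·X)^j · p_j where each p_j ∈ R[X_1,…,X_N] is harmonic and only finitely many p_j are nonzero; that is, there is a unique finitely-supported family (p_j)_{j∈ℕ} of harmonic polynomials with p = Σ_j (X·X)^j p_j. Moreover, if p is homogeneous of degree d, then each nonzero p_j is homogeneous of degree d − 2j. -/
open MvPolynomial

noncomputable section
namespace Stmt6Aux

open Finset

variable {R : Type*} [CommRing R] {N : ℕ}

theorem lap_add (p q : MvPolynomial (Fin N) R) : lap (p + q) = lap p + lap q := by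
  simp [lap, Finset.sum_add_distrib]

theorem lap_sub (p q : MvPolynomial (Fin N) R) : lap (p - q) = lap p - lap q := by
  simp [lap, Finset.sum_sub_distrib]

theorem lap_zero : lap (0 : MvPolynomial (Fin N) R) = 0 := by simp [lap]

theorem lap_C (a : R) : lap (C a : MvPolynomial (Fin N) R) = 0 := by
  simp [lap, pderiv_C]

theorem lap_C_mul (a : R) (p : MvPolynomial (Fin N) R) :
    lap (C a * p) = C a * lap p := by
  simp [lap, pderiv_C_mul, Finset.mul_sum]

theorem lap_sum {ι : Type*} (s : Finset ι) (f : ι → MvPolynomial (Fin N) R) :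
    lap (∑ i ∈ s, f i) = ∑ i ∈ s, lap (f i) := by
  classical
  induction s using Finset.induction_on with
  | empty => simp [lap_zero]
  | @insert a s h ih => rw [Finset.sum_insert h, Finset.sum_insert h, lap_add, ih]

theorem degree_eq_sum_univ {n : ℕ} (s : Fin n →₀ ℕ) : s.degree = ∑ i, s i :=
  Finset.sum_subset (Finset.subset_univ _)
    (fun i _ hi => Finsupp.notMem_support_iff.mp hi)

theorem degree_of_mem {p : MvPolynomial (Fin N) R} {n : ℕ} (h : p.IsHomogeneous n)
    {v : Fin N →₀ ℕ} (hv : v ∈ p.support) : v.degree = n := by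
  rw [Finsupp.degree_eq_weight_one]
  exact h (MvPolynomial.mem_support_iff.mp hv)

theorem degree_sub_single {n : ℕ} (s : Fin n →₀ ℕ) (i : Fin n) (h : s i ≠ 0) :
    (s - Finsupp.single i 1 : Fin n →₀ ℕ).degree + 1 = s.degree := by
  rw [degree_eq_sum_univ, degree_eq_sum_univ,
    ← Finset.add_sum_erase _ (fun j => (s - Finsupp.single i 1 : Fin n →₀ ℕ) j)
      (Finset.mem_univ i),
    ← Finset.add_sum_erase _ (fun j => s j) (Finset.mem_univ i)]
  have h1 : (s - Finsupp.single i 1 : Fin n →₀ ℕ) i = s i - 1 := by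
    rw [Finsupp.tsub_apply, Finsupp.single_eq_same]
  have h2 : ∀ j ∈ Finset.univ.erase i, (s - Finsupp.single i 1 : Fin n →₀ ℕ) j = s j := by
    intro j hj
    rw [Finsupp.tsub_apply, Finsupp.single_eq_of_ne' (Finset.ne_of_mem_erase hj).symm]
    omega
  rw [Finset.sum_congr rfl h2, h1]
  have h4 : ((Finset.univ.erase i).sum ⇑s) = ∑ x ∈ Finset.univ.erase i, s x := rfl
  rw [h4]
  omega

theorem isHomogeneous_pderiv {p : MvPolynomial (Fin N) R} {n : ℕ} (i : Fin N)
    (h : p.IsHomogeneous n) : (pderiv i p).IsHomogeneous (n - 1) := by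
  rw [p.as_sum, map_sum]
  apply IsHomogeneous.sum
  intro v hv
  rw [pderiv_monomial]
  by_cases hvi : v i = 0
  · rw [hvi]
    simpa using isHomogeneous_zero _ _ _
  · apply isHomogeneous_monomial
    have hdeg : v.degree = n := degree_of_mem h hv
    have := degree_sub_single v i hvi
    omega

theorem euler_monomial (v : Fin N →₀ ℕ) (c : R) :
    ∑ i, X i * pderiv i (monomial v c) = v.degree • monomial v c := by
  have key : ∀ i : Fin N, X i * pderiv i (monomial v c) = (v i) • monomial v c := by
    intro i
    rw [pderiv_monomial]
    by_cases hvi : v i = 0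
    · rw [hvi]; simp
    · rw [X, monomial_mul, one_mul]
      have hv : Finsupp.single i 1 + (v - Finsupp.single i 1) = v := by
        ext j
        rw [Finsupp.add_apply, Finsupp.tsub_apply]
        rcases eq_or_ne j i with rfl | hj
        · rw [Finsupp.single_eq_same]; omega
        · rw [Finsupp.single_eq_of_ne' hj.symm]; omega
      rw [hv, smul_monomial]
      congr 1
      rw [nsmul_eq_mul, mul_comm]
  rw [Finset.sum_congr rfl (fun i _ => key i), ← Finset.sum_smul, degree_eq_sum_univ]

theorem euler {p : MvPolynomial (Fin N) R} {n : ℕ} (h : p.IsHomogeneous n) :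
    ∑ i, X i * pderiv i p = n • p := by
  conv_lhs => rw [p.as_sum]
  conv_rhs => rw [p.as_sum]
  rw [Finset.smul_sum]
  simp only [map_sum, Finset.mul_sum]
  rw [Finset.sum_comm]
  exact Finset.sum_congr rfl fun v hv => by rw [euler_monomial, degree_of_mem h hv]


theorem comp_monomial (d : ℕ) (s : Fin N →₀ ℕ) (a : R) :
    homogeneousComponent d (monomial s a) = if d = s.degree then monomial s a else 0 :=
  homogeneousComponent_of_mem (isHomogeneous_monomial a rfl)

theorem comp_pderiv (i : Fin N) (d : ℕ) (p : MvPolynomial (Fin N) R) :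
    homogeneousComponent d (pderiv i p) = pderiv i (homogeneousComponent (d + 1) p) := by
  induction p using MvPolynomial.induction_on' with
  | add p q hp hq => rw [map_add, map_add, hp, hq, map_add, map_add]
  | monomial s a =>
    rw [pderiv_monomial, comp_monomial, comp_monomial]
    by_cases hsi : s i = 0
    · split_ifs <;> simp [hsi]
    · have hd := degree_sub_single s i hsi
      by_cases h : d + 1 = s.degree
      · rw [if_pos h, if_pos (by omega), pderiv_monomial]
      · rw [if_neg h, if_neg (by omega), map_zero]

theorem comp_lap (d : ℕ) (p : MvPolynomial (Fin N) R) :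
    homogeneousComponent d (lap p) = lap (homogeneousComponent (d + 2) p) := by
  rw [lap, lap, map_sum]
  exact Finset.sum_congr rfl fun i _ => by rw [comp_pderiv, comp_pderiv]

theorem lap_comp_one (p : MvPolynomial (Fin N) R) :
    lap (homogeneousComponent 1 p) = 0 := by
  rw [lap]
  apply Finset.sum_eq_zero
  intro i _
  rw [← comp_pderiv, homogeneousComponent_zero, pderiv_C]

theorem lap_comp_zero (p : MvPolynomial (Fin N) R) :
    lap (homogeneousComponent 0 p) = 0 := by
  rw [homogeneousComponent_zero, lap_C]

theorem lap_comp_of_harmonic {p : MvPolynomial (Fin N) R} (h : lap p = 0) (m : ℕ) :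
    lap (homogeneousComponent m p) = 0 := by
  match m with
  | 0 => exact lap_comp_zero p
  | 1 => exact lap_comp_one p
  | (k + 2) => rw [← comp_lap, h, map_zero]

theorem lap_of_low {p : MvPolynomial (Fin N) R} {d : ℕ} (h : p.IsHomogeneous d)
    (hd : d < 2) : lap p = 0 := by
  have hc : homogeneousComponent d p = p := by
    rw [homogeneousComponent_of_mem h, if_pos rfl]
  interval_cases d
  · rw [← hc]; exact lap_comp_zero p
  · rw [← hc]; exact lap_comp_one p

theorem mul_comp_le {q : MvPolynomial (Fin N) R} {m : ℕ} (hq : q.IsHomogeneous m)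
    (p : MvPolynomial (Fin N) R) (n : ℕ) (h : m ≤ n) :
    homogeneousComponent n (q * p) = q * homogeneousComponent (n - m) p := by
  induction p using MvPolynomial.induction_on' with
  | add p₁ p₂ h1 h2 => rw [mul_add, map_add, h1, h2, map_add, mul_add]
  | monomial s a =>
    have hmem : (q * monomial s a).IsHomogeneous (m + s.degree) :=
      hq.mul (isHomogeneous_monomial a rfl)
    rw [homogeneousComponent_of_mem hmem, comp_monomial]
    by_cases hn : n = m + s.degree
    · rw [if_pos hn, if_pos (by omega), mul_comm]
    · rw [if_neg hn, if_neg (by omega), mul_zero]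

theorem mul_comp_lt {q : MvPolynomial (Fin N) R} {m : ℕ} (hq : q.IsHomogeneous m)
    (p : MvPolynomial (Fin N) R) (n : ℕ) (h : n < m) :
    homogeneousComponent n (q * p) = 0 := by
  induction p using MvPolynomial.induction_on' with
  | add p₁ p₂ h1 h2 => rw [mul_add, map_add, h1, h2, add_zero]
  | monomial s a =>
    have hmem : (q * monomial s a).IsHomogeneous (m + s.degree) :=
      hq.mul (isHomogeneous_monomial a rfl)
    rw [homogeneousComponent_of_mem hmem, if_neg (by omega)]

theorem XX_isHomogeneous : (XX R N).IsHomogeneous 2 := by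
  apply IsHomogeneous.sum
  intro i _
  rw [sq]
  exact (isHomogeneous_X _ _).mul (isHomogeneous_X _ _)

theorem XX_pow_isHomogeneous (k : ℕ) : (XX R N ^ k).IsHomogeneous (2 * k) := by
  induction k with
  | zero => simpa using isHomogeneous_one _ _
  | succ k ih =>
    have := ih.mul XX_isHomogeneous
    rw [← pow_succ] at this
    have he : 2 * k + 2 = 2 * (k + 1) := by omega
    rwa [he] at this

section Rat

variable [Algebra ℚ R]

/-- Embedding of rational constants. -/
def qc (a : ℚ) : MvPolynomial (Fin N) R := C (algebraMap ℚ R a)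

theorem qc_mul (a b : ℚ) : (qc a : MvPolynomial (Fin N) R) * qc b = qc (a * b) := by
  rw [qc, qc, qc, ← C_mul, ← map_mul]

theorem qc_add (a b : ℚ) : (qc a : MvPolynomial (Fin N) R) + qc b = qc (a + b) := by
  rw [qc, qc, qc, ← C_add, ← map_add]

theorem qc_one : (qc 1 : MvPolynomial (Fin N) R) = 1 := by
  rw [qc, map_one, C_1]

theorem qc_two : (qc 2 : MvPolynomial (Fin N) R) = C (2 : R) := by
  rw [qc, map_ofNat]

theorem nsmul_qc (k : ℕ) (x : MvPolynomial (Fin N) R) : k • x = qc (k : ℚ) * x := by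
  rw [nsmul_eq_mul, qc, map_natCast, map_natCast]

theorem lap_qc_mul (a : ℚ) (p : MvPolynomial (Fin N) R) :
    lap (qc a * p) = qc a * lap p := lap_C_mul _ _

theorem qc_cancel {a : ℚ} (ha : a ≠ 0) {x : MvPolynomial (Fin N) R}
    (h : qc a * x = 0) : x = 0 := by
  have : (qc a⁻¹ : MvPolynomial (Fin N) R) * (qc a * x) = x := by
    rw [← mul_assoc, qc_mul, inv_mul_cancel₀ ha, qc_one, one_mul]
  rw [h, mul_zero] at this
  exact this.symm

theorem qc_mul_isHomogeneous (a : ℚ) {p : MvPolynomial (Fin N) R} {n : ℕ}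
    (h : p.IsHomogeneous n) : (qc a * p : MvPolynomial (Fin N) R).IsHomogeneous n := by
  have := (isHomogeneous_C (Fin N) (algebraMap ℚ R a)).mul h
  rwa [zero_add] at this

omit [Algebra ℚ R] in
theorem pderiv_XX (i : Fin N) : pderiv i (XX R N) = C (2 : R) * X i := by
  rw [XX, map_sum, Finset.sum_eq_single i]
  · rw [sq, pderiv_mul, pderiv_X_self, mul_one, one_mul,
      show (C (2:R) : MvPolynomial (Fin N) R) = 2 from map_ofNat C 2]
    ring
  · intro j _ hj
    rw [sq, pderiv_mul, pderiv_X_of_ne hj, mul_zero, zero_mul, add_zero]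
  · intro h; exact absurd (Finset.mem_univ i) h

theorem lap_XX_mul (p : MvPolynomial (Fin N) R) :
    lap (XX R N * p) =
      XX R N * lap p + qc (2 * N : ℚ) * p + qc 4 * ∑ i, X i * pderiv i p := by
  have key : ∀ i : Fin N, pderiv i (pderiv i (XX R N * p)) =
      C (2:R) * p + (C (2:R) * (X i * pderiv i p) + C (2:R) * (X i * pderiv i p)
        + XX R N * pderiv i (pderiv i p)) := by
    intro i
    simp only [pderiv_mul, pderiv_XX, pderiv_C_mul, pderiv_X_self, pderiv_C, map_add]
    ring
  rw [lap, Finset.sum_congr rfl fun i _ => key i, Finset.sum_add_distrib,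
    Finset.sum_add_distrib, Finset.sum_add_distrib, Finset.sum_const,
    Finset.card_univ, Fintype.card_fin, ← Finset.mul_sum, ← Finset.mul_sum,
    lap, nsmul_qc, ← qc_two,
    show (qc (N:ℚ) : MvPolynomial (Fin N) R) * (qc 2 * p) = qc (2*N:ℚ) * p by
      rw [← mul_assoc, qc_mul, mul_comm (N:ℚ) 2]]
  have c2 : (qc 2 : MvPolynomial (Fin N) R) * (∑ i, X i * pderiv i p)
      + qc 2 * (∑ i, X i * pderiv i p) = qc 4 * (∑ i, X i * pderiv i p) := by
    rw [← add_mul, qc_add, show (2+2:ℚ) = 4 by norm_num]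
  rw [c2]
  ring

theorem lap_XX_pow {h : MvPolynomial (Fin N) R} {m : ℕ}
    (hh : lap h = 0) (hm : h.IsHomogeneous m) (j : ℕ) :
    lap (XX R N ^ (j + 1) * h) =
      qc ((2 * (j+1) * (N + 2*m + 2*j) : ℕ) : ℚ) * (XX R N ^ j * h) := by
  induction j with
  | zero =>
    rw [pow_one, pow_zero, one_mul, lap_XX_mul, hh, mul_zero, zero_add,
      euler hm, nsmul_qc, ← mul_assoc (qc 4) (qc (m : ℚ)) h, qc_mul,
      ← add_mul, qc_add]
    congr 1
    push_cast
    ring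
  | succ j ih =>
    have hpow : XX R N ^ (j + 1 + 1) * h = XX R N * (XX R N ^ (j + 1) * h) := by
      ring
    have hhom : (XX R N ^ (j+1) * h).IsHomogeneous (2*(j+1) + m) :=
      (XX_pow_isHomogeneous (j+1)).mul hm
    rw [hpow, lap_XX_mul, ih, euler hhom, nsmul_qc]
    have e1 : XX R N * (qc ((2 * (j+1) * (N + 2*m + 2*j) : ℕ) : ℚ) * (XX R N ^ j * h))
        = qc ((2 * (j+1) * (N + 2*m + 2*j) : ℕ) : ℚ) * (XX R N ^ (j+1) * h) := by
      ring
    rw [e1, ← mul_assoc (qc 4) (qc ((2*(j+1)+m : ℕ) : ℚ)) (XX R N ^ (j+1) * h), qc_mul,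
      ← add_mul, ← add_mul, qc_add, qc_add]
    congr 1
    push_cast
    ring

end Rat

section Main

variable [Algebra ℚ R]

omit [Algebra ℚ R] in
theorem lap_isHomogeneous {p : MvPolynomial (Fin N) R} {d : ℕ}
    (h : p.IsHomogeneous d) : (lap p).IsHomogeneous (d - 2) := by
  rw [lap]
  apply IsHomogeneous.sum
  intro i _
  have h2 := isHomogeneous_pderiv i (isHomogeneous_pderiv i h)
  rwa [Nat.sub_sub] at h2

theorem coeff_ne_zero (hN : 2 ≤ N) (d k : ℕ) :
    ((2 * (k+1) * (N + 2 * (d - 2 * (k+1)) + 2 * k) : ℕ) : ℚ) ≠ 0 := by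
  have hpos : (0:ℕ) < 2 * (k+1) * (N + 2 * (d - 2 * (k+1)) + 2 * k) :=
    Nat.mul_pos (by omega) (by omega)
  exact_mod_cast hpos.ne'

theorem ex_hom (hN : 2 ≤ N) : ∀ d : ℕ, ∀ p : MvPolynomial (Fin N) R, p.IsHomogeneous d →
    ∃ g : ℕ → MvPolynomial (Fin N) R, (∀ j, lap (g j) = 0) ∧
      (∀ j, (g j).IsHomogeneous (d - 2 * j)) ∧ (∀ j, d < 2 * j → g j = 0) ∧
      p = ∑ j ∈ Finset.range (d + 1), XX R N ^ j * g j := by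
  intro d
  induction d using Nat.strong_induction_on with
  | _ d IH =>
    intro p hp
    rcases lt_or_ge d 2 with hd | hd
    · refine ⟨fun j => if j = 0 then p else 0, ?_, ?_, ?_, ?_⟩
      · intro j
        beta_reduce
        rcases eq_or_ne j 0 with rfl | hj
        · rw [if_pos rfl]; exact lap_of_low hp hd
        · rw [if_neg hj]; exact lap_zero
      · intro j
        beta_reduce
        rcases eq_or_ne j 0 with rfl | hj
        · rw [if_pos rfl]; simpa using hp
        · rw [if_neg hj]; exact isHomogeneous_zero _ _ _
      · intro j hj
        beta_reduce
        rw [if_neg (by omega)]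
      · beta_reduce
        rw [Finset.sum_eq_single 0]
        · rw [if_pos rfl, pow_zero, one_mul]
        · intro j _ hj; rw [if_neg hj, mul_zero]
        · intro hmem; exact absurd (Finset.mem_range.mpr (by omega)) hmem
    · obtain ⟨g', hg1, hg2, hg3, hsum⟩ := IH (d - 2) (by omega) (lap p) (lap_isHomogeneous hp)
      have ghom : ∀ k, (g' k).IsHomogeneous (d - 2 * (k+1)) := by
        intro k
        have := hg2 k
        rwa [show d - 2 - 2 * k = d - 2 * (k + 1) by omega] at this
      set T : ℕ → MvPolynomial (Fin N) R :=
        fun k => qc (((2 * (k+1) * (N + 2 * (d - 2 * (k+1)) + 2 * k) : ℕ) : ℚ))⁻¹ * g' k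
        with hT
      have thom : ∀ k, (T k).IsHomogeneous (d - 2 * (k+1)) := by
        intro k
        simp only [hT]
        exact qc_mul_isHomogeneous _ (ghom k)
      have tharm : ∀ k, lap (T k) = 0 := by
        intro k
        simp only [hT, lap_qc_mul, hg1 k, mul_zero]
      have tzero : ∀ k, d < 2 * (k + 1) → T k = 0 := by
        intro k hk
        simp only [hT, hg3 k (by omega), mul_zero]
      have lapt : ∀ k, lap (XX R N ^ (k+1) * T k) = XX R N ^ k * g' k := by
        intro k
        rw [lap_XX_pow (tharm k) (thom k) k]
        simp only [hT]
        rw [mul_left_comm (XX R N ^ k), ← mul_assoc, qc_mul,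
          mul_inv_cancel₀ (coeff_ne_zero hN d k), qc_one, one_mul]
      have hlap0 : ∑ k ∈ Finset.range d, lap (XX R N ^ (k+1) * T k) = lap p := by
        rw [Finset.sum_congr rfl fun k _ => lapt k, hsum]
        refine (Finset.sum_subset (Finset.range_subset_range.mpr (by omega)) ?_).symm
        intro x _ hx
        rw [hg3 x (by simp only [Finset.mem_range] at hx; omega), mul_zero]
      refine ⟨fun j => if j = 0 then p - ∑ k ∈ Finset.range d, XX R N ^ (k+1) * T k
        else T (j - 1), ?_, ?_, ?_, ?_⟩
      · intro j
        beta_reduce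
        rcases eq_or_ne j 0 with rfl | hj
        · rw [if_pos rfl, lap_sub, lap_sum, hlap0, sub_self]
        · rw [if_neg hj]; exact tharm _
      · intro j
        beta_reduce
        rcases eq_or_ne j 0 with rfl | hj
        · rw [if_pos rfl]
          simp only [Nat.mul_zero, Nat.sub_zero]
          refine hp.sub (IsHomogeneous.sum _ _ _ ?_)
          intro k _
          by_cases hk : 2 * (k + 1) ≤ d
          · have := (XX_pow_isHomogeneous (k+1)).mul (thom k)
            rwa [show 2 * (k+1) + (d - 2 * (k+1)) = d by omega] at this
          · rw [tzero k (by omega), mul_zero]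
            exact isHomogeneous_zero _ _ _
        · rw [if_neg hj]
          obtain ⟨k, rfl⟩ := Nat.exists_eq_succ_of_ne_zero hj
          simpa using thom k
      · intro j hj
        beta_reduce
        have hj0 : j ≠ 0 := by omega
        rw [if_neg hj0]
        obtain ⟨k, rfl⟩ := Nat.exists_eq_succ_of_ne_zero hj0
        simpa using tzero k (by omega)
      · beta_reduce
        rw [Finset.sum_range_succ']
        simp [Nat.succ_ne_zero, Nat.add_sub_cancel]

theorem uniq_hom (hN : 2 ≤ N) : ∀ d : ℕ, ∀ g : ℕ → MvPolynomial (Fin N) R,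
    (∀ j, lap (g j) = 0) → (∀ j, (g j).IsHomogeneous (d - 2 * j)) →
    (∀ j, d < 2 * j → g j = 0) →
    (∑ j ∈ Finset.range (d + 1), XX R N ^ j * g j) = 0 → ∀ j, g j = 0 := by
  intro d
  induction d using Nat.strong_induction_on with
  | _ d IH =>
    intro g hg1 hg2 hg3 hsum
    rcases lt_or_ge d 2 with hd | hd
    · have h0 : g 0 = 0 := by
        rw [Finset.sum_eq_single 0] at hsum
        · rwa [pow_zero, one_mul] at hsum
        · intro j hj hj0
          rw [hg3 j (by simp only [Finset.mem_range] at hj; omega), mul_zero]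
        · intro hmem; exact absurd (Finset.mem_range.mpr (by omega)) hmem
      intro j
      rcases eq_or_ne j 0 with rfl | hj
      · exact h0
      · exact hg3 j (by omega)
    · have hlap : ∑ k ∈ Finset.range d,
          qc (((2 * (k+1) * (N + 2 * (d - 2 * (k+1)) + 2 * k) : ℕ) : ℚ))
            * (XX R N ^ k * g (k+1)) = 0 := by
        have h1 := congrArg lap hsum
        rw [lap_sum, lap_zero, Finset.sum_range_succ', pow_zero, one_mul, hg1 0,
          add_zero] at h1
        rw [← h1]
        exact Finset.sum_congr rfl fun k _ => (lap_XX_pow (hg1 (k+1)) (hg2 (k+1)) k).symm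
      have hsum2 : ∑ k ∈ Finset.range (d - 2 + 1), XX R N ^ k *
          (qc (((2 * (k+1) * (N + 2 * (d - 2 * (k+1)) + 2 * k) : ℕ) : ℚ)) * g (k+1)) = 0 := by
        rw [Finset.sum_congr rfl
          (fun k _ => (mul_left_comm (qc _) (XX R N ^ k) (g (k+1))))] at hlap
        rw [← hlap]
        refine Finset.sum_subset (Finset.range_subset_range.mpr (by omega)) ?_
        intro x _ hx
        rw [hg3 (x+1) (by simp only [Finset.mem_range] at hx; omega), mul_zero, mul_zero]
      have key := IH (d - 2) (by omega)
        (fun k => qc (((2 * (k+1) * (N + 2 * (d - 2 * (k+1)) + 2 * k) : ℕ) : ℚ)) * g (k+1))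
        (fun k => by simp only [lap_qc_mul, hg1 (k+1), mul_zero])
        (fun k => by
          beta_reduce
          rw [show d - 2 - 2 * k = d - 2 * (k+1) by omega]
          exact qc_mul_isHomogeneous _ (hg2 (k+1)))
        (fun k hk => by beta_reduce; rw [hg3 (k+1) (by omega), mul_zero])
        hsum2
      have gsucc : ∀ k, g (k + 1) = 0 := by
        intro k
        exact qc_cancel (coeff_ne_zero hN d k) (key k)
      have h0 : g 0 = 0 := by
        rw [Finset.sum_range_succ', pow_zero, one_mul,
          Finset.sum_congr rfl (fun k _ => by rw [gsucc k, mul_zero]),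
          Finset.sum_const_zero, zero_add] at hsum
        exact hsum
      intro j
      rcases eq_or_ne j 0 with rfl | hj
      · exact h0
      · obtain ⟨k, rfl⟩ := Nat.exists_eq_succ_of_ne_zero hj
        exact gsucc k

end Main

section Gen

variable [Algebra ℚ R]

theorem uniq_gen (hN : 2 ≤ N) (n : ℕ) (g : ℕ → MvPolynomial (Fin N) R)
    (hg : ∀ j, lap (g j) = 0) (hv : ∀ j, n ≤ j → g j = 0)
    (hs : ∑ j ∈ Finset.range n, XX R N ^ j * g j = 0) : ∀ j, g j = 0 := by
  have comp0 : ∀ D j : ℕ, 2 * j ≤ D → homogeneousComponent (D - 2 * j) (g j) = 0 := by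
    intro D
    have e1 : ∀ j : ℕ, homogeneousComponent D (XX R N ^ j * g j)
        = XX R N ^ j * (if 2 * j ≤ D then homogeneousComponent (D - 2 * j) (g j) else 0) := by
      intro j
      by_cases hj : 2 * j ≤ D
      · rw [if_pos hj, mul_comp_le (XX_pow_isHomogeneous j) _ _ hj]
      · rw [if_neg hj, mul_comp_lt (XX_pow_isHomogeneous j) _ _ (by omega), mul_zero]
    have e2 : ∑ j ∈ Finset.range n, XX R N ^ j *
        (if 2 * j ≤ D then homogeneousComponent (D - 2 * j) (g j) else 0) = 0 := by
      rw [← Finset.sum_congr rfl (fun j _ => e1 j), ← map_sum, hs, map_zero]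
    have e3 : ∑ j ∈ Finset.range (D + 1), XX R N ^ j *
        (if 2 * j ≤ D then homogeneousComponent (D - 2 * j) (g j) else 0) = 0 := by
      have big1 : ∑ j ∈ Finset.range (D + 1), XX R N ^ j *
          (if 2 * j ≤ D then homogeneousComponent (D - 2 * j) (g j) else 0)
          = ∑ j ∈ Finset.range (max n (D + 1)), XX R N ^ j *
          (if 2 * j ≤ D then homogeneousComponent (D - 2 * j) (g j) else 0) := by
        apply Finset.sum_subset (Finset.range_subset_range.mpr (le_max_right _ _))
        intro x _ hx
        rw [if_neg (by simp only [Finset.mem_range] at hx; omega), mul_zero]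
      have big2 : ∑ j ∈ Finset.range n, XX R N ^ j *
          (if 2 * j ≤ D then homogeneousComponent (D - 2 * j) (g j) else 0)
          = ∑ j ∈ Finset.range (max n (D + 1)), XX R N ^ j *
          (if 2 * j ≤ D then homogeneousComponent (D - 2 * j) (g j) else 0) := by
        apply Finset.sum_subset (Finset.range_subset_range.mpr (le_max_left _ _))
        intro x _ hx
        rw [hv x (by simp only [Finset.mem_range] at hx; omega), map_zero, ite_self,
          mul_zero]
      rw [big1, ← big2, e2]
    have := uniq_hom hN D
      (fun j => if 2 * j ≤ D then homogeneousComponent (D - 2 * j) (g j) else 0)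
      (fun j => by
        show lap (if 2 * j ≤ D then homogeneousComponent (D - 2 * j) (g j) else 0) = 0
        split_ifs
        · exact lap_comp_of_harmonic (hg j) _
        · exact lap_zero)
      (fun j => by
        show (if 2 * j ≤ D then homogeneousComponent (D - 2 * j) (g j) else 0).IsHomogeneous
          (D - 2 * j)
        split_ifs
        · exact homogeneousComponent_isHomogeneous _ _
        · exact isHomogeneous_zero _ _ _)
      (fun j hj => by
        show (if 2 * j ≤ D then homogeneousComponent (D - 2 * j) (g j) else 0) = 0
        rw [if_neg (by omega)])
      e3
    intro j hj
    have h2 : (if 2 * j ≤ D then homogeneousComponent (D - 2 * j) (g j) else 0) = 0 :=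
      this j
    rwa [if_pos hj] at h2
  intro j
  rw [← sum_homogeneousComponent (g j)]
  apply Finset.sum_eq_zero
  intro m _
  have := comp0 (m + 2 * j) j (by omega)
  rwa [show m + 2 * j - 2 * j = m by omega] at this

theorem ex_gen (hN : 2 ≤ N) (p : MvPolynomial (Fin N) R) :
    ∃ n : ℕ, ∃ g : ℕ → MvPolynomial (Fin N) R, (∀ j, lap (g j) = 0) ∧
      (∀ j, n ≤ j → g j = 0) ∧ p = ∑ j ∈ Finset.range n, XX R N ^ j * g j := by
  have H : ∀ d : ℕ, ∃ g : ℕ → MvPolynomial (Fin N) R, (∀ j, lap (g j) = 0) ∧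
      (∀ j, d < 2 * j → g j = 0) ∧
      homogeneousComponent d p = ∑ j ∈ Finset.range (d + 1), XX R N ^ j * g j := by
    intro d
    obtain ⟨g, h1, _, h3, h4⟩ :=
      ex_hom hN d (homogeneousComponent d p) (homogeneousComponent_isHomogeneous d p)
    exact ⟨g, h1, h3, h4⟩
  choose G hG1 hG3 hG4 using H
  refine ⟨p.totalDegree + 1, fun j => ∑ d ∈ Finset.range (p.totalDegree + 1), G d j,
    ?_, ?_, ?_⟩
  · intro j
    rw [lap_sum]
    exact Finset.sum_eq_zero fun d _ => hG1 d j
  · intro j hj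
    apply Finset.sum_eq_zero
    intro d hd
    exact hG3 d j (by simp only [Finset.mem_range] at hd; omega)
  · have step1 : ∀ d ∈ Finset.range (p.totalDegree + 1), homogeneousComponent d p
        = ∑ j ∈ Finset.range (p.totalDegree + 1), XX R N ^ j * G d j := by
      intro d hd
      rw [hG4 d]
      apply Finset.sum_subset
        (Finset.range_subset_range.mpr (by simp only [Finset.mem_range] at hd; omega))
      intro x _ hx
      rw [hG3 d x (by simp only [Finset.mem_range] at hx; omega), mul_zero]
    calc p = ∑ d ∈ Finset.range (p.totalDegree + 1), homogeneousComponent d p :=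
        (sum_homogeneousComponent p).symm
      _ = ∑ d ∈ Finset.range (p.totalDegree + 1), ∑ j ∈ Finset.range (p.totalDegree + 1),
          XX R N ^ j * G d j := Finset.sum_congr rfl step1
      _ = ∑ j ∈ Finset.range (p.totalDegree + 1), ∑ d ∈ Finset.range (p.totalDegree + 1),
          XX R N ^ j * G d j := Finset.sum_comm
      _ = ∑ j ∈ Finset.range (p.totalDegree + 1), XX R N ^ j *
          ∑ d ∈ Finset.range (p.totalDegree + 1), G d j :=
        Finset.sum_congr rfl fun j _ => (Finset.mul_sum _ _ _).symm

theorem finsupp_sum_eq (f : ℕ →₀ MvPolynomial (Fin N) R) (n : ℕ)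
    (hn : f.support ⊆ Finset.range n) :
    (f.sum fun j q => XX R N ^ j * q) = ∑ j ∈ Finset.range n, XX R N ^ j * f j :=
  Finsupp.sum_of_support_subset f hn _ (fun j _ => mul_zero _)

theorem finsupp_uniq (hN : 2 ≤ N) (f₁ f₂ : ℕ →₀ MvPolynomial (Fin N) R)
    (h1 : ∀ j, lap (f₁ j) = 0) (h2 : ∀ j, lap (f₂ j) = 0)
    (he : (f₁.sum fun j q => XX R N ^ j * q) = f₂.sum fun j q => XX R N ^ j * q) :
    f₁ = f₂ := by
  obtain ⟨n, hn⟩ := (f₁.support ∪ f₂.support).exists_nat_subset_range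
  have hn1 : f₁.support ⊆ Finset.range n := Finset.subset_union_left.trans hn
  have hn2 : f₂.support ⊆ Finset.range n := Finset.subset_union_right.trans hn
  rw [finsupp_sum_eq f₁ n hn1, finsupp_sum_eq f₂ n hn2] at he
  have hz := uniq_gen hN n (fun j => f₁ j - f₂ j)
    (fun j => by show lap (f₁ j - f₂ j) = 0; rw [lap_sub, h1, h2, sub_self])
    (fun j hj => by
      show f₁ j - f₂ j = 0
      have e1 : f₁ j = 0 := Finsupp.notMem_support_iff.mp
        (fun hmem => by have := Finset.mem_range.mp (hn1 hmem); omega)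
      have e2 : f₂ j = 0 := Finsupp.notMem_support_iff.mp
        (fun hmem => by have := Finset.mem_range.mp (hn2 hmem); omega)
      rw [e1, e2, sub_self])
    (by
      rw [Finset.sum_congr rfl (fun j _ => mul_sub (XX R N ^ j) (f₁ j) (f₂ j)),
        Finset.sum_sub_distrib, he, sub_self])
  exact Finsupp.ext fun j => sub_eq_zero.mp (hz j)

end Gen

end Stmt6Aux

/-- over a ℚ-algebra, every polynomial has a unique expansion
`p = Σ_j (X·X)^j p_j` with all `p_j` harmonic (finitely supported family); and if `p`
is homogeneous of degree `d` then each nonzero `p_j` is homogeneous of degree `d − 2j`. -/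
theorem stmt6 {R : Type*} [CommRing R] [Algebra ℚ R] {N : ℕ} (hN : 2 ≤ N)
    (p : MvPolynomial (Fin N) R) :
    (∃! f : ℕ →₀ MvPolynomial (Fin N) R,
      (∀ j, lap (f j) = 0) ∧ p = f.sum fun j q => XX R N ^ j * q) ∧
    (∀ d : ℕ, p.IsHomogeneous d →
      ∀ f : ℕ →₀ MvPolynomial (Fin N) R,
        (∀ j, lap (f j) = 0) → p = (f.sum fun j q => XX R N ^ j * q) →
        ∀ j, f j ≠ 0 → 2 * j ≤ d ∧ (f j).IsHomogeneous (d - 2 * j)) := by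
  constructor
  · obtain ⟨n, g, hg1, hg2, hg3⟩ := Stmt6Aux.ex_gen hN p
    have hmem : ∀ a : ℕ, g a ≠ 0 → a ∈ Finset.range n := by
      intro a ha
      rw [Finset.mem_range]
      by_contra h
      exact ha (hg2 a (by omega))
    set F : ℕ →₀ MvPolynomial (Fin N) R := Finsupp.onFinset (Finset.range n) g hmem
      with hF
    have hFapp : ∀ j, F j = g j := fun j => rfl
    have hFharm : ∀ j, lap (F j) = 0 := fun j => by rw [hFapp]; exact hg1 j
    have hFsum : p = F.sum fun j q => XX R N ^ j * q := by
      rw [Stmt6Aux.finsupp_sum_eq F n Finsupp.support_onFinset_subset,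
        Finset.sum_congr rfl fun j _ => by rw [hFapp]]
      exact hg3
    refine ⟨F, ⟨hFharm, hFsum⟩, ?_⟩
    intro y hy
    exact Stmt6Aux.finsupp_uniq hN y F hy.1 hFharm (hy.2.symm.trans hFsum)
  · intro d hp f hf1 hf2 j hfj
    obtain ⟨g, hg1, hg2, hg3, hg4⟩ := Stmt6Aux.ex_hom hN d p hp
    obtain ⟨n0, hn0⟩ := f.support.exists_nat_subset_range
    have hfsub : f.support ⊆ Finset.range (max n0 (d + 1)) :=
      hn0.trans (Finset.range_subset_range.mpr (le_max_left _ _))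
    have hfs : p = ∑ k ∈ Finset.range (max n0 (d + 1)), XX R N ^ k * f k := by
      rw [hf2, Stmt6Aux.finsupp_sum_eq f _ hfsub]
    have hgs : p = ∑ k ∈ Finset.range (max n0 (d + 1)), XX R N ^ k * g k := by
      rw [hg4]
      apply Finset.sum_subset (Finset.range_subset_range.mpr (le_max_right _ _))
      intro x _ hx
      rw [hg3 x (by simp only [Finset.mem_range] at hx; omega), mul_zero]
    have hz := Stmt6Aux.uniq_gen hN (max n0 (d + 1)) (fun k => f k - g k)
      (fun k => by show lap (f k - g k) = 0
                   rw [Stmt6Aux.lap_sub, hf1, hg1, sub_self])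
      (fun k hk => by
        show f k - g k = 0
        have e1 : f k = 0 := Finsupp.notMem_support_iff.mp
          (fun hmemk => by have := Finset.mem_range.mp (hfsub hmemk); omega)
        have e2 : g k = 0 := hg3 k (by omega)
        rw [e1, e2, sub_self])
      (by
        rw [Finset.sum_congr rfl (fun k _ => mul_sub (XX R N ^ k) (f k) (g k)),
          Finset.sum_sub_distrib, ← hfs, ← hgs, sub_self])
    have hfg : f j = g j := sub_eq_zero.mp (hz j)
    have h2j : 2 * j ≤ d := by
      by_contra h
      exact hfj (by rw [hfg]; exact hg3 j (by omega))
    refine ⟨h2j, ?_⟩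
    rw [hfg]
    exact hg2 j
end
end

section
/- Let R be a field of characteristic 0 and d ≥ 0 an integer. The R-vector space H_{N,d} of homogeneous harmonic polynomials of degree d in R[X_1,…,X_N] (together with 0) has dimension binom(N+d−1, N−1) − binom(N+d−3, N−1), where a binomial coefficient binom(a,b) is taken to be 0 when a < b. -/
open MvPolynomial

/-- The Laplacian as an `R`-linear map. -/
noncomputable def lapLM (R : Type*) [CommRing R] (N : ℕ) :
    MvPolynomial (Fin N) R →ₗ[R] MvPolynomial (Fin N) R :=
  ∑ j : Fin N, ((pderiv j).toLinearMap ∘ₗ (pderiv j).toLinearMap)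

section Harmonic

set_option linter.unusedSectionVars false

open Finsupp

variable {R : Type*} [Field R] [CharZero R] {N : ℕ}



/-- double antiderivative in variable 0 -/
noncomputable def Jmap (R : Type*) [Field R] (N : ℕ) [NeZero N] :
    MvPolynomial (Fin N) R →ₗ[R] MvPolynomial (Fin N) R :=
  (basisMonomials (Fin N) R).constr R fun α =>
    ((((α 0 + 1) * (α 0 + 2) : ℕ) : R))⁻¹ • monomial (α + Finsupp.single 0 2) 1

lemma Jmap_monomial [NeZero N] (α : Fin N →₀ ℕ) (r : R) :
    Jmap R N (monomial α r)
      = ((((α 0 + 1) * (α 0 + 2) : ℕ) : R))⁻¹ • monomial (α + Finsupp.single 0 2) r := by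
  have h1 : monomial α r = r • monomial α (1 : R) := by
    rw [← (monomial α).map_smul, smul_eq_mul, mul_one]
  rw [h1, map_smul, Jmap]
  have h2 : (basisMonomials (Fin N) R) α = monomial α (1:R) := by
    rw [coe_basisMonomials]
  rw [← h2, Module.Basis.constr_basis]
  rw [smul_comm, ← (monomial _).map_smul, smul_eq_mul, mul_one]

lemma single_zero_two_add (α : Fin N →₀ ℕ) [NeZero N] :
    α + Finsupp.single (0 : Fin N) 2 - Finsupp.single 0 1 = α + Finsupp.single 0 1 := by
  ext i
  by_cases h : (0 : Fin N) = i <;>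
    simp [Finsupp.sub_apply, Finsupp.add_apply, Finsupp.single_apply, h]

lemma pd0_pd0_Jmap [NeZero N] :
    (pderiv 0).toLinearMap ∘ₗ ((pderiv 0).toLinearMap ∘ₗ Jmap R N)
      = (LinearMap.id : MvPolynomial (Fin N) R →ₗ[R] _) := by
  apply (basisMonomials (Fin N) R).ext
  intro α
  have h2 : (basisMonomials (Fin N) R) α = monomial α (1:R) := by rw [coe_basisMonomials]
  rw [h2]
  simp only [LinearMap.comp_apply, LinearMap.id_apply, Derivation.coeFn_coe]
  rw [Jmap_monomial, Derivation.map_smul, pderiv_monomial, Derivation.map_smul, pderiv_monomial]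
  rw [single_zero_two_add]
  have hidx : α + Finsupp.single (0:Fin N) 1 - Finsupp.single 0 1 = α := by simp
  rw [hidx]
  have ha : ((α + Finsupp.single 0 2 : Fin N →₀ ℕ) 0) = α 0 + 2 := by
    simp [Finsupp.add_apply, Finsupp.single_apply]
  have hb : ((α + Finsupp.single 0 1 : Fin N →₀ ℕ) 0) = α 0 + 1 := by
    simp [Finsupp.add_apply, Finsupp.single_apply]
  rw [ha, hb, ← (monomial α).map_smul]
  congr 1
  have hne : ((((α 0 + 1) * (α 0 + 2) : ℕ) : R)) ≠ 0 := by
    exact Nat.cast_ne_zero.mpr (by positivity)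
  rw [smul_eq_mul, inv_mul_eq_one₀ hne]
  push_cast
  ring

lemma pd_Jmap_comm [NeZero N] {j : Fin N} (hj : j ≠ 0) :
    (pderiv j).toLinearMap ∘ₗ Jmap R N = Jmap R N ∘ₗ (pderiv j).toLinearMap := by
  apply (basisMonomials (Fin N) R).ext
  intro α
  have h2 : (basisMonomials (Fin N) R) α = monomial α (1:R) := by rw [coe_basisMonomials]
  rw [h2]
  simp only [LinearMap.comp_apply, Derivation.coeFn_coe]
  rw [Jmap_monomial, Derivation.map_smul, pderiv_monomial, pderiv_monomial, Jmap_monomial]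
  have h0 : ((α - Finsupp.single j 1 : Fin N →₀ ℕ) 0) = α 0 := by
    simp [Finsupp.sub_apply, Finsupp.single_apply, hj]
  have hj2 : ((α + Finsupp.single 0 2 : Fin N →₀ ℕ) j) = α j := by
    simp [Finsupp.add_apply, Finsupp.single_apply, (Ne.symm hj)]
  rw [h0, hj2]
  by_cases hz : α j = 0
  · simp [hz]
  · have hidx : α + Finsupp.single (0:Fin N) 2 - Finsupp.single j 1
        = α - Finsupp.single j 1 + Finsupp.single 0 2 := by
      ext i
      by_cases h1 : j = i
      · subst h1
        simp [Finsupp.sub_apply, Finsupp.add_apply, Finsupp.single_apply, (Ne.symm hj), hj]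
      · by_cases h2 : (0:Fin N) = i <;>
          simp [Finsupp.sub_apply, Finsupp.add_apply, Finsupp.single_apply, h1, h2]
    rw [hidx]

-- need map_mem_homog and degree lemmas from t2 here; assume merged later
lemma degree_add'_s7 {σ : Type*} (a b : σ →₀ ℕ) :
    Finsupp.degree (a + b) = Finsupp.degree a + Finsupp.degree b := by
  simp [Finsupp.degree_eq_weight_one, map_add]

lemma degree_single'_s7 {σ : Type*} (j : σ) (n : ℕ) : Finsupp.degree (Finsupp.single j n) = n := by
  classical
  simp [Finsupp.degree_eq_weight_one, Finsupp.weight_apply, Finsupp.sum_single_index]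

lemma map_mem_homog {R : Type*} [CommRing R] {σ : Type*}
    (M : MvPolynomial σ R →ₗ[R] MvPolynomial σ R) {a b : ℕ}
    (h : ∀ (α : σ →₀ ℕ) (r : R), Finsupp.degree α = a →
      M (monomial α r) ∈ homogeneousSubmodule σ R b)
    {p : MvPolynomial σ R} (hp : p ∈ homogeneousSubmodule σ R a) :
    M p ∈ homogeneousSubmodule σ R b := by
  rw [p.as_sum, map_sum]
  refine Submodule.sum_mem _ fun α hα => h α _ ?_
  rw [mem_homogeneousSubmodule] at hp
  rw [Finsupp.degree_eq_weight_one]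
  exact hp (MvPolynomial.mem_support_iff.mp hα)

lemma Jmap_mem [NeZero N] {a : ℕ} {p : MvPolynomial (Fin N) R}
    (hp : p ∈ homogeneousSubmodule (Fin N) R a) :
    Jmap R N p ∈ homogeneousSubmodule (Fin N) R (a + 2) := by
  refine map_mem_homog (Jmap R N) ?_ hp
  intro α r hα
  rw [Jmap_monomial]
  refine Submodule.smul_mem _ _ ?_
  rw [mem_homogeneousSubmodule]
  refine isHomogeneous_monomial _ ?_
  rw [degree_add'_s7, degree_single'_s7, hα]

lemma pderiv_mem {R : Type*} [CommRing R] {σ : Type*} (j : σ) {a : ℕ}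
    {p : MvPolynomial σ R} (hp : p ∈ homogeneousSubmodule σ R a) :
    pderiv j p ∈ homogeneousSubmodule σ R (a - 1) := by
  refine map_mem_homog (pderiv j).toLinearMap ?_ hp
  intro α r hα
  show pderiv j (monomial α r) ∈ _
  rw [pderiv_monomial]
  by_cases h : α j = 0
  · simp [h]
  · rw [mem_homogeneousSubmodule]
    refine isHomogeneous_monomial _ ?_
    have hle : Finsupp.single j 1 ≤ α := by rw [Finsupp.single_le_iff]; omega
    have := degree_add'_s7 (α - Finsupp.single j 1) (Finsupp.single j 1)
    rw [tsub_add_cancel_of_le hle, degree_single'_s7] at this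
    omega

lemma pderiv_zero_of_mem0 {R : Type*} [CommRing R] {σ : Type*} (j : σ)
    {p : MvPolynomial σ R} (hp : p ∈ homogeneousSubmodule σ R 0) :
    pderiv j p = 0 := by
  rw [p.as_sum, map_sum]
  refine Finset.sum_eq_zero fun α hα => ?_
  have hdeg : Finsupp.degree α = 0 := by
    rw [Finsupp.degree_eq_weight_one]
    exact ((mem_homogeneousSubmodule _ _).mp hp) (MvPolynomial.mem_support_iff.mp hα)
  rw [Finsupp.degree_eq_zero_iff] at hdeg
  subst hdeg
  rw [pderiv_monomial]
  simp

noncomputable def Dpr (R : Type*) [CommRing R] (N : ℕ) [NeZero N] :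
    MvPolynomial (Fin N) R →ₗ[R] MvPolynomial (Fin N) R :=
  ∑ j ∈ Finset.univ.erase 0, (pderiv j).toLinearMap ∘ₗ (pderiv j).toLinearMap


lemma lapLM_eq [NeZero N] :
    lapLM R N = (pderiv 0).toLinearMap ∘ₗ (pderiv (0 : Fin N)).toLinearMap + Dpr R N := by
  rw [lapLM, Dpr]
  exact (Finset.add_sum_erase _ _ (Finset.mem_univ (0 : Fin N))).symm

lemma pdpd_mem {R : Type*} [CommRing R] {N : ℕ} (j : Fin N) {a : ℕ}
    {p : MvPolynomial (Fin N) R} (hp : p ∈ homogeneousSubmodule (Fin N) R a) :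
    pderiv j (pderiv j p) ∈ homogeneousSubmodule (Fin N) R (a - 2) := by
  have := pderiv_mem j (pderiv_mem j hp)
  rwa [Nat.sub_sub] at this

lemma Dpr_mem [NeZero N] {a : ℕ} {p : MvPolynomial (Fin N) R}
    (hp : p ∈ homogeneousSubmodule (Fin N) R a) :
    Dpr R N p ∈ homogeneousSubmodule (Fin N) R (a - 2) := by
  rw [Dpr]
  simp only [LinearMap.coe_sum, Finset.sum_apply, LinearMap.comp_apply]
  exact Submodule.sum_mem _ fun j _ => pdpd_mem j hp

lemma pdpd_zero {R : Type*} [CommRing R] {N : ℕ} (j : Fin N) {a : ℕ} (ha : a ≤ 1)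
    {p : MvPolynomial (Fin N) R} (hp : p ∈ homogeneousSubmodule (Fin N) R a) :
    pderiv j (pderiv j p) = 0 := by
  have h1 : pderiv j p ∈ homogeneousSubmodule (Fin N) R 0 := by
    have := pderiv_mem j hp
    interval_cases a <;> simpa using this
  exact pderiv_zero_of_mem0 j h1

lemma Dpr_zero [NeZero N] {a : ℕ} (ha : a ≤ 1) {p : MvPolynomial (Fin N) R}
    (hp : p ∈ homogeneousSubmodule (Fin N) R a) : Dpr R N p = 0 := by
  rw [Dpr]
  simp only [LinearMap.coe_sum, Finset.sum_apply, LinearMap.comp_apply]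
  exact Finset.sum_eq_zero fun j _ => pdpd_zero j ha hp

lemma lapLM_zero [NeZero N] {a : ℕ} (ha : a ≤ 1) {p : MvPolynomial (Fin N) R}
    (hp : p ∈ homogeneousSubmodule (Fin N) R a) : lapLM R N p = 0 := by
  rw [lapLM]
  simp only [LinearMap.coe_sum, Finset.sum_apply, LinearMap.comp_apply]
  exact Finset.sum_eq_zero fun j _ => pdpd_zero j ha hp

lemma Dpr_pow_mem [NeZero N] {a : ℕ} (k : ℕ) {p : MvPolynomial (Fin N) R}
    (hp : p ∈ homogeneousSubmodule (Fin N) R a) :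
    (Dpr R N ^ k) p ∈ homogeneousSubmodule (Fin N) R (a - 2 * k) := by
  induction k generalizing a p with
  | zero => simpa using hp
  | succ k ih =>
    rw [pow_succ, Module.End.mul_apply]
    have := ih (Dpr_mem hp)
    rwa [Nat.sub_sub, show 2 + 2 * k = 2 * (k+1) by ring] at this

lemma Dpr_pow_zero [NeZero N] {a k : ℕ} (hak : a < 2 * k) {p : MvPolynomial (Fin N) R}
    (hp : p ∈ homogeneousSubmodule (Fin N) R a) :
    (Dpr R N ^ k) p = 0 := by
  induction k generalizing a p with
  | zero => omega
  | succ k ih =>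
    rw [pow_succ, Module.End.mul_apply]
    by_cases ha : a ≤ 1
    · rw [Dpr_zero ha hp, map_zero]
    · exact ih (a := a - 2) (by omega) (Dpr_mem hp)

lemma Jmap_pow_mem [NeZero N] {a : ℕ} (m : ℕ) {p : MvPolynomial (Fin N) R}
    (hp : p ∈ homogeneousSubmodule (Fin N) R a) :
    (Jmap R N ^ m) p ∈ homogeneousSubmodule (Fin N) R (a + 2 * m) := by
  induction m generalizing a p with
  | zero => simpa using hp
  | succ m ih =>
    rw [pow_succ, Module.End.mul_apply]
    have := ih (Jmap_mem hp)
    rwa [show a + 2 + 2 * m = a + 2 * (m+1) by ring] at this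

lemma Dpr_Jmap_comm [NeZero N] [CharZero R] :
    Dpr R N * Jmap R N = Jmap R N * Dpr R N := by
  rw [Dpr, Finset.sum_mul, Finset.mul_sum]
  refine Finset.sum_congr rfl fun j hj => ?_
  have hj0 : j ≠ 0 := Finset.ne_of_mem_erase hj
  have h := pd_Jmap_comm (R := R) (N := N) hj0
  have h' : (pderiv j).toLinearMap * Jmap R N = Jmap R N * (pderiv j).toLinearMap := h
  have hpd : ((pderiv j).toLinearMap ∘ₗ (pderiv j).toLinearMap :
        MvPolynomial (Fin N) R →ₗ[R] MvPolynomial (Fin N) R)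
      = (pderiv j).toLinearMap * (pderiv j).toLinearMap := rfl
  rw [hpd, mul_assoc, h', ← mul_assoc, h', mul_assoc]

set_option maxHeartbeats 1000000 in
lemma surj_lemma [NeZero N] [CharZero R] (a : ℕ) (q : MvPolynomial (Fin N) R)
    (hq : q ∈ homogeneousSubmodule (Fin N) R a) :
    ∃ p ∈ homogeneousSubmodule (Fin N) R (a + 2), lapLM R N p = q := by
  set J := Jmap R N
  set D := Dpr R N
  set p := ∑ k ∈ Finset.range (a + 1), (-1 : R) ^ k • (J ^ (k+1)) ((D ^ k) q) with hp
  have hP00J : ((pderiv 0).toLinearMap ∘ₗ (pderiv (0:Fin N)).toLinearMap) * J = 1 := by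
    have h := pd0_pd0_Jmap (R := R) (N := N)
    rw [Module.End.mul_eq_comp, LinearMap.comp_assoc, Module.End.one_eq_id]
    exact h
  refine ⟨p, ?_, ?_⟩
  · refine Submodule.sum_mem _ fun k hk => Submodule.smul_mem _ _ ?_
    by_cases hka : 2 * k ≤ a
    · have h1 := Dpr_pow_mem (R := R) k hq
      have h2 := Jmap_pow_mem (R := R) (k + 1) h1
      rwa [show a - 2 * k + 2 * (k + 1) = a + 2 by omega] at h2
    · rw [Dpr_pow_zero (by omega) hq, map_zero]
      exact Submodule.zero_mem _
  · rw [lapLM_eq, hp, map_sum]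
    have hterm : ∀ k, ((pderiv 0).toLinearMap ∘ₗ (pderiv (0:Fin N)).toLinearMap + D :
          MvPolynomial (Fin N) R →ₗ[R] MvPolynomial (Fin N) R)
        ((-1 : R) ^ k • (J ^ (k+1)) ((D ^ k) q))
        = (-1 : R) ^ k • (J ^ k) ((D ^ k) q)
          - (-1 : R) ^ (k+1) • (J ^ (k+1)) ((D ^ (k+1)) q) := by
      intro k
      rw [map_smul, LinearMap.add_apply]
      have e1 : ((pderiv 0).toLinearMap ∘ₗ (pderiv (0:Fin N)).toLinearMap)
          ((J ^ (k+1)) ((D ^ k) q)) = (J ^ k) ((D ^ k) q) := by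
        have : (((pderiv 0).toLinearMap ∘ₗ (pderiv (0:Fin N)).toLinearMap) * J ^ (k+1))
            = J ^ k := by
          rw [pow_succ', ← mul_assoc, hP00J, one_mul]
        exact DFunLike.congr_fun this ((D ^ k) q)
      have e2 : D ((J ^ (k+1)) ((D ^ k) q)) = (J ^ (k+1)) ((D ^ (k+1)) q) := by
        have hc : D * J ^ (k+1) = J ^ (k+1) * D :=
          (Commute.pow_right (Dpr_Jmap_comm (R := R) (N := N)) (k+1))
        have := DFunLike.congr_fun hc ((D ^ k) q)
        simp only [Module.End.mul_apply] at this
        rw [this]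
        congr 1
        exact (DFunLike.congr_fun (pow_succ' D k).symm q)
      rw [e1, e2, smul_add]
      congr 1
      rw [pow_succ (-1 : R), mul_comm ((-1:R)^k) (-1 : R), mul_smul, neg_one_smul, sub_neg_eq_add]
    rw [Finset.sum_congr rfl fun k _ => hterm k]
    rw [Finset.sum_range_sub' (fun k => (-1 : R) ^ k • (J ^ k) ((D ^ k) q)) (a+1)]
    have hz : (D ^ (a+1)) q = 0 := Dpr_pow_zero (by omega) hq
    simp [hz]


/-- the subtype of finsupps of degree d is equivalent to `Sym (Fin N) d`. -/
noncomputable def degreeEquivSym (N d : ℕ) :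
    {α : Fin N →₀ ℕ // α.degree = d} ≃ Sym (Fin N) d where
  toFun f := ⟨Finsupp.toMultiset f.1, by
    rw [Finsupp.card_toMultiset]
    exact f.2⟩
  invFun m := ⟨Multiset.toFinsupp m.1, by
    have h := Finsupp.card_toMultiset (Multiset.toFinsupp m.1)
    rw [Multiset.toFinsupp_toMultiset] at h
    have h2 : (Multiset.toFinsupp m.1).degree = Multiset.card m.1 := by
      rw [h]; rfl
    rw [h2, m.2]⟩
  left_inv f := by
    apply Subtype.ext
    simp
  right_inv m := by
    apply Subtype.ext
    simp

example : True := trivial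

noncomputable instance degFintype (N d : ℕ) : Fintype {α : Fin N →₀ ℕ // α.degree = d} :=
  Fintype.ofEquiv _ (degreeEquivSym N d).symm

lemma card_deg (N d : ℕ) (hN : 1 ≤ N) :
    Fintype.card {α : Fin N →₀ ℕ // α.degree = d} = (N + d - 1).choose (N - 1) := by
  rw [Fintype.card_congr (degreeEquivSym N d), Sym.card_sym_eq_choose, Fintype.card_fin]
  rw [← Nat.choose_symm (by omega : d ≤ N + d - 1)]
  congr 1
  omega

/-- supported set equality -/
noncomputable def homogEquiv (R : Type*) [Field R] (N d : ℕ) :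
    (homogeneousSubmodule (Fin N) R d) ≃ₗ[R] ({α : Fin N →₀ ℕ // α.degree = d} →₀ R) :=
  (LinearEquiv.ofEq _ _ (homogeneousSubmodule_eq_finsupp_supported (Fin N) R d)).trans
    (AddMonoidAlgebra.supportedEquivFinsupp {α : Fin N →₀ ℕ | α.degree = d})

instance homogFinDim (R : Type*) [Field R] (N d : ℕ) :
    FiniteDimensional R (homogeneousSubmodule (Fin N) R d) :=
  Module.Finite.equiv (homogEquiv R N d).symm

lemma finrank_homog (R : Type*) [Field R] (N d : ℕ) (hN : 1 ≤ N) :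
    Module.finrank R (homogeneousSubmodule (Fin N) R d) = (N + d - 1).choose (N - 1) := by
  rw [(homogEquiv R N d).finrank_eq, Module.finrank_finsupp_self, card_deg N d hN]

lemma lapLM_mem [NeZero N] {a : ℕ} {p : MvPolynomial (Fin N) R}
    (hp : p ∈ homogeneousSubmodule (Fin N) R a) :
    lapLM R N p ∈ homogeneousSubmodule (Fin N) R (a - 2) := by
  rw [lapLM]
  simp only [LinearMap.coe_sum, Finset.sum_apply, LinearMap.comp_apply]
  exact Submodule.sum_mem _ fun j _ => pdpd_mem j hp

end Harmonic

set_option maxHeartbeats 1000000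
set_option synthInstance.maxHeartbeats 400000

/-- over a field of characteristic 0, the space of homogeneous harmonic
polynomials of degree `d` has dimension `C(N+d−1, N−1) − C(N+d−3, N−1)`. -/
theorem stmt7 {R : Type*} [Field R] [CharZero R] {N : ℕ} (hN : 2 ≤ N) (d : ℕ) :
    Module.finrank R
      ↥(homogeneousSubmodule (Fin N) R d ⊓ LinearMap.ker (lapLM R N)) =
      Nat.choose (N + d - 1) (N - 1) - Nat.choose (N + d - 3) (N - 1) := by
  have hNZ : NeZero N := ⟨by omega⟩
  rcases lt_or_ge d 2 with hd | hd
  · have hker : homogeneousSubmodule (Fin N) R d ⊓ LinearMap.ker (lapLM R N)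
        = homogeneousSubmodule (Fin N) R d := by
      rw [inf_eq_left]
      intro p hp
      rw [LinearMap.mem_ker]
      exact lapLM_zero (by omega) hp
    rw [hker, finrank_homog R N d (by omega),
      Nat.choose_eq_zero_of_lt (by omega : N + d - 3 < N - 1), Nat.sub_zero]
  · obtain ⟨e, rfl⟩ : ∃ e, d = e + 2 := ⟨d - 2, by omega⟩
    set P := homogeneousSubmodule (Fin N) R (e + 2) with hP
    set Q := homogeneousSubmodule (Fin N) R e with hQ
    have hmaps : ∀ p ∈ P, lapLM R N p ∈ Q := by
      intro p hp
      have := lapLM_mem (a := e + 2) hp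
      rwa [show e + 2 - 2 = e by omega] at this
    set L := (lapLM R N).restrict hmaps with hL
    have hsurj : Function.Surjective L := by
      rintro ⟨y, hy⟩
      obtain ⟨p, hp1, hp2⟩ := surj_lemma e y hy
      exact ⟨⟨p, hp1⟩, Subtype.ext hp2⟩
    have h1 := LinearMap.finrank_range_add_finrank_ker L
    rw [LinearMap.range_eq_top.mpr hsurj, finrank_top] at h1
    have hkerL : LinearMap.ker L = (LinearMap.ker (lapLM R N)).comap P.subtype :=
      LinearMap.ker_restrict hmaps
    have hcomap : (P ⊓ LinearMap.ker (lapLM R N)).comap P.subtype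
        = (LinearMap.ker (lapLM R N)).comap P.subtype := by
      rw [Submodule.comap_inf, Submodule.comap_subtype_self, top_inf_eq]
    have hfr : Module.finrank R ↥(P ⊓ LinearMap.ker (lapLM R N))
        = Module.finrank R (LinearMap.ker L) := by
      rw [hkerL, ← hcomap]
      exact (Submodule.comapSubtypeEquivOfLe
        (inf_le_left : P ⊓ LinearMap.ker (lapLM R N) ≤ P)).finrank_eq.symm
    rw [hfr]
    have h2 : Module.finrank R Q = (N + e - 1).choose (N - 1) := finrank_homog R N e (by omega)
    have h3 : Module.finrank R P = (N + (e + 2) - 1).choose (N - 1) :=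
      finrank_homog R N (e + 2) (by omega)
    rw [h2, h3] at h1
    rw [show N + (e + 2) - 3 = N + e - 1 by omega]
    omega
end

section
/- Suppose R contains ℚ (R is a ℚ-algebra) and let c ∈ R. If p ∈ R[X_1,…,X_N] is such that M_{jk}(p) lies in the ideal generated by X·X − c for all pairs of distinct indices j, k ∈ {1,…,N}, then there exists a constant c' ∈ R such that p − c' lies in the ideal generated by X·X − c. -/
open MvPolynomial

namespace Stmt10Aux

variable {R : Type*} [CommRing R] {N : ℕ}

lemma degree_eq_sum_univ (d : Fin N →₀ ℕ) : d.degree = ∑ j, d j := by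
  rw [Finsupp.degree]
  exact Finset.sum_subset (Finset.subset_univ _) (by
    intro x _ hx
    simpa using (Finsupp.notMem_support_iff.mp hx))

lemma degree_add (d e : Fin N →₀ ℕ) : (d + e).degree = d.degree + e.degree := by
  simp [degree_eq_sum_univ, Finset.sum_add_distrib]

lemma degree_single (j : Fin N) (n : ℕ) : (Finsupp.single j n).degree = n := by
  simp [degree_eq_sum_univ, Finsupp.single_apply]

lemma rot_zero (j k : Fin N) : rot j k (0 : MvPolynomial (Fin N) R) = 0 := by
  simp [rot]

lemma rot_add (j k : Fin N) (a b : MvPolynomial (Fin N) R) :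
    rot j k (a + b) = rot j k a + rot j k b := by
  simp only [rot, map_add]; ring

lemma rot_sub (j k : Fin N) (a b : MvPolynomial (Fin N) R) :
    rot j k (a - b) = rot j k a - rot j k b := by
  simp only [rot, map_sub]; ring

lemma rot_mul (j k : Fin N) (a b : MvPolynomial (Fin N) R) :
    rot j k (a * b) = a * rot j k b + b * rot j k a := by
  simp only [rot, pderiv_mul]; ring

lemma rot_self (j : Fin N) (a : MvPolynomial (Fin N) R) : rot j j a = 0 := by
  simp [rot]

lemma pderiv_XX (k : Fin N) : pderiv k (XX R N) = 2 * X k := by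
  rw [XX, map_sum]
  rw [Finset.sum_eq_single k]
  · simp [pow_two, pderiv_mul]; ring
  · intro i _ hik
    simp [pow_two, pderiv_mul, pderiv_X_of_ne hik]
  · simp

lemma rot_XX (j k : Fin N) : rot j k (XX R N) = 0 := by
  simp [rot, pderiv_XX]; ring

lemma rot_XXc (j k : Fin N) (c : R) : rot j k (XX R N - C c) = 0 := by
  rw [rot_sub, rot_XX]
  simp [rot]

lemma XX_isHomogeneous : (XX R N).IsHomogeneous 2 :=
  IsHomogeneous.sum _ _ _ fun j _ => isHomogeneous_X_pow j 2

/-- `X a * ∂_b f` preserves homogeneity degree. -/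
lemma X_mul_pderiv_isHomogeneous (a b : Fin N) {f : MvPolynomial (Fin N) R} {m : ℕ}
    (hf : f.IsHomogeneous m) : (X a * pderiv b f).IsHomogeneous m := by
  nth_rewrite 1 [f.as_sum]
  rw [map_sum, Finset.mul_sum]
  apply IsHomogeneous.sum
  intro s hs
  rw [pderiv_monomial]
  rcases Nat.eq_zero_or_pos (s b) with h0 | hpos
  · simp [h0]
    exact isHomogeneous_zero _ _ _
  · rw [X, monomial_mul, one_mul]
    apply isHomogeneous_monomial
    have hsd : s.degree = m := by
      have := hf (mem_support_iff.mp hs)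
      rwa [Pi.one_def, ← Finsupp.degree_eq_weight_one] at this
    have hle : Finsupp.single b 1 ≤ s := by
      rw [Finsupp.single_le_iff]; exact hpos
    have hst : Finsupp.single b 1 + (s - Finsupp.single b 1) = s :=
      add_tsub_cancel_of_le hle
    have hdeg : 1 + (s - Finsupp.single b 1).degree = m := by
      have h2 := congrArg Finsupp.degree hst
      rw [degree_add, degree_single] at h2
      omega
    rw [degree_add, degree_single]
    omega

lemma rot_isHomogeneous (j k : Fin N) {f : MvPolynomial (Fin N) R} {m : ℕ}
    (hf : f.IsHomogeneous m) : (rot j k f).IsHomogeneous m :=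
  (X_mul_pderiv_isHomogeneous j k hf).sub (X_mul_pderiv_isHomogeneous k j hf)

/-- Euler's identity for homogeneous polynomials. -/
lemma euler {f : MvPolynomial (Fin N) R} {m : ℕ} (hf : f.IsHomogeneous m) :
    ∑ j, X j * pderiv j f = m • f := by
  conv_lhs => rw [f.as_sum]
  conv_rhs => rw [f.as_sum]
  rw [Finset.smul_sum]
  simp only [map_sum, Finset.mul_sum]
  rw [Finset.sum_comm]
  apply Finset.sum_congr rfl
  intro s hs
  have hsd : s.degree = m := by
    have := hf (mem_support_iff.mp hs)
    rwa [Pi.one_def, ← Finsupp.degree_eq_weight_one] at this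
  have : ∀ j : Fin N, X j * pderiv j (monomial s (coeff s f))
      = (s j) • monomial s (coeff s f) := by
    intro j
    rw [pderiv_monomial]
    rcases Nat.eq_zero_or_pos (s j) with h0 | hpos
    · simp [h0]
    · have hle : Finsupp.single j 1 ≤ s := by
        rw [Finsupp.single_le_iff]; exact hpos
      rw [X, monomial_mul, one_mul, add_tsub_cancel_of_le hle, smul_monomial]
      congr 1
      rw [nsmul_eq_mul, mul_comm]
  rw [Finset.sum_congr rfl (fun j _ => this j), ← Finset.sum_smul]
  congr 1
  rw [← hsd, degree_eq_sum_univ]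

/-- `XX − C c` is a nonzerodivisor. -/
lemma XXc_regular (hN : 1 ≤ N) (c : R) {b : MvPolynomial (Fin N) R}
    (hb : (XX R N - C c) * b = 0) : b = 0 := by
  obtain ⟨n, rfl⟩ : ∃ n, N = n + 1 := ⟨N - 1, by omega⟩
  have himg : finSuccEquiv R n (XX R (n+1) - C c)
      = Polynomial.X ^ 2 + Polynomial.C ((∑ j : Fin n, X j ^ 2) - C c) := by
    have hC : finSuccEquiv R n (C c) = Polynomial.C (C c) := by
      simp [finSuccEquiv_apply]
    rw [XX, map_sub, map_sum, Fin.sum_univ_succ]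
    simp only [map_pow, finSuccEquiv_X_zero, finSuccEquiv_X_succ]
    rw [hC, map_sub, map_sum]
    simp only [map_pow]
    ring
  have hmonic : (finSuccEquiv R n (XX R (n+1) - C c)).Monic := by
    rw [himg]
    exact Polynomial.monic_X_pow_add (lt_of_le_of_lt (Polynomial.degree_C_le) (by norm_num))
  have hprod : finSuccEquiv R n (XX R (n+1) - C c) * finSuccEquiv R n b = 0 := by
    rw [← map_mul, hb, map_zero]
  have hb0 : finSuccEquiv R n b = 0 := by
    apply hmonic.isRegular.left
    show _ * _ = _ * _
    rw [mul_zero]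
    exact hprod
  have := congrArg (finSuccEquiv R n).symm hb0
  simpa using this

lemma XX_regular (hN : 1 ≤ N) {b : MvPolynomial (Fin N) R}
    (hb : XX R N * b = 0) : b = 0 := by
  apply XXc_regular hN (0 : R)
  simpa using hb

/-- homogeneous component commutes with degree-shifting additive operators. -/
lemma hcomp_comm (T : MvPolynomial (Fin N) R → MvPolynomial (Fin N) R)
    (hT0 : T 0 = 0) (hTadd : ∀ a b, T (a + b) = T a + T b) (s : ℕ)
    (hTh : ∀ (i : ℕ) (q : MvPolynomial (Fin N) R), q.IsHomogeneous i → (T q).IsHomogeneous (i + s))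
    (e : ℕ) (p : MvPolynomial (Fin N) R) :
    homogeneousComponent (e + s) (T p) = T (homogeneousComponent e p) := by
  have hsum : ∀ (t : Finset ℕ) (g : ℕ → MvPolynomial (Fin N) R),
      T (∑ i ∈ t, g i) = ∑ i ∈ t, T (g i) := by
    intro t g
    induction t using Finset.induction with
    | empty => simpa using hT0
    | insert _ _ hx ih => rw [Finset.sum_insert hx, Finset.sum_insert hx, hTadd, ih]
  conv_lhs => rw [← p.sum_homogeneousComponent]
  rw [hsum, map_sum]
  have hterm : ∀ i, homogeneousComponent (e + s) (T (homogeneousComponent i p))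
      = if e = i then T (homogeneousComponent i p) else 0 := by
    intro i
    have : (T (homogeneousComponent i p)).IsHomogeneous (i + s) :=
      hTh i _ (homogeneousComponent_isHomogeneous i p)
    rw [homogeneousComponent_of_mem this]
    simp only [Nat.add_right_cancel_iff]
  rw [Finset.sum_congr rfl fun i _ => hterm i, Finset.sum_ite_eq]
  split
  · rfl
  · next he =>
    have : homogeneousComponent e p = 0 :=
      homogeneousComponent_eq_zero _ _ (by simpa using (by
        simp only [Finset.mem_range, not_lt] at he
        omega : p.totalDegree < e))
    rw [this, hT0]

lemma hcomp_rot (j k : Fin N) (e : ℕ) (p : MvPolynomial (Fin N) R) :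
    homogeneousComponent e (rot j k p) = rot j k (homogeneousComponent e p) := by
  have := hcomp_comm (rot j k) (rot_zero j k) (rot_add j k) 0
    (fun i q hq => by simpa using rot_isHomogeneous j k hq) e p
  simpa using this

lemma hcomp_XX_mul (e : ℕ) (p : MvPolynomial (Fin N) R) :
    homogeneousComponent (e + 2) (XX R N * p) = XX R N * homogeneousComponent e p := by
  exact hcomp_comm (fun q => XX R N * q) (by simp) (fun a b => by ring) 2
    (fun i q hq => by simpa [add_comm] using XX_isHomogeneous.mul hq) e p

lemma totalDegree_rot_le (j k : Fin N) (p : MvPolynomial (Fin N) R) :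
    (rot j k p).totalDegree ≤ p.totalDegree := by
  conv_lhs => rw [← p.sum_homogeneousComponent]
  have hsum : rot j k (∑ i ∈ Finset.range (p.totalDegree + 1), homogeneousComponent i p)
      = ∑ i ∈ Finset.range (p.totalDegree + 1), rot j k (homogeneousComponent i p) := by
    induction (Finset.range (p.totalDegree + 1)) using Finset.induction with
    | empty => simpa using rot_zero j k
    | insert _ _ hx ih => rw [Finset.sum_insert hx, Finset.sum_insert hx, rot_add, ih]
  rw [hsum]
  apply totalDegree_finsetSum_le
  intro i hi
  exact le_trans (rot_isHomogeneous j k (homogeneousComponent_isHomogeneous i p)).totalDegree_le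
    (by simp at hi; omega)


lemma hcomp_totalDegree_ne_zero {p : MvPolynomial (Fin N) R} (hp : p ≠ 0) :
    homogeneousComponent p.totalDegree p ≠ 0 := by
  have hsupp : p.support.Nonempty :=
    Finset.nonempty_iff_ne_empty.mpr (fun hmem => hp (support_eq_empty.mp hmem))
  obtain ⟨d, hd, hdd⟩ := Finset.exists_mem_eq_sup _ hsupp (fun s => s.sum fun _ e => e)
  intro h0
  have hcd : coeff d (homogeneousComponent p.totalDegree p) = 0 := by rw [h0]; simp
  rw [coeff_homogeneousComponent] at hcd
  have hdeg : d.degree = p.totalDegree := by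
    rw [Finsupp.degree, totalDegree, hdd, Finsupp.sum]
    rfl
  rw [if_pos hdeg] at hcd
  exact (mem_support_iff.mp hd) hcd

lemma totalDegree_XXc_mul (hN : 1 ≤ N) (c : R) {f : MvPolynomial (Fin N) R} (hf : f ≠ 0) :
    ((XX R N - C c) * f).totalDegree = f.totalDegree + 2 := by
  apply le_antisymm
  · refine le_trans (totalDegree_mul _ _) ?_
    have h1 : (XX R N - C c).totalDegree ≤ 2 := by
      rw [sub_eq_add_neg]
      refine le_trans (totalDegree_add _ _) ?_
      rw [totalDegree_neg]
      simp [XX_isHomogeneous.totalDegree_le, totalDegree_C]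
    omega
  · by_contra hlt
    push_neg at hlt
    have h2 : homogeneousComponent (f.totalDegree + 2) ((XX R N - C c) * f) = 0 :=
      homogeneousComponent_eq_zero _ _ hlt
    have h3 : homogeneousComponent (f.totalDegree + 2) ((XX R N - C c) * f)
        = XX R N * homogeneousComponent f.totalDegree f := by
      have hexp : (XX R N - C c) * f = XX R N * f - C c * f := by ring
      rw [hexp, map_sub, hcomp_XX_mul, homogeneousComponent_C_mul,
        homogeneousComponent_eq_zero (f.totalDegree + 2) f (by omega), mul_zero, sub_zero]
    exact hcomp_totalDegree_ne_zero hf (XX_regular hN (by rw [← h3, h2]))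

lemma nsmul_mem_cancel [Algebra ℚ R] {J : Ideal (MvPolynomial (Fin N) R)}
    {x : MvPolynomial (Fin N) R} {n : ℕ} (hn : n ≠ 0) (hx : n • x ∈ J) : x ∈ J := by
  have h1 : ((n : ℚ) • x) ∈ J := by rwa [Nat.cast_smul_eq_nsmul]
  have h2 : x = (n : ℚ)⁻¹ • ((n : ℚ) • x) := by
    rw [← mul_smul, inv_mul_cancel₀ (by exact_mod_cast hn), one_smul]
  rw [h2, Algebra.smul_def]
  exact Ideal.mul_mem_left _ _ h1

lemma homog_case [Algebra ℚ R] (hN : 2 ≤ N) {f : MvPolynomial (Fin N) R} {m : ℕ}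
    (hm : 1 ≤ m) (hf : f.IsHomogeneous m)
    (h : ∀ j k : Fin N, rot j k f ∈ Ideal.span {XX R N}) : f ∈ Ideal.span {XX R N} := by
  set J := Ideal.span {XX R N} with hJ
  have hXXJ : XX R N ∈ J := Ideal.subset_span (Set.mem_singleton _)
  have hXf : ∀ j, X j * f ∈ J := by
    intro j
    have key : m • (X j * f) = (∑ k, X k * rot j k f) + XX R N * pderiv j f := by
      have hs : ∑ k, X k * rot j k f
          = X j * (∑ k, X k * pderiv k f) - (∑ k, X k ^ 2) * pderiv j f := by
        rw [Finset.mul_sum, Finset.sum_mul, ← Finset.sum_sub_distrib]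
        apply Finset.sum_congr rfl
        intro k _
        rw [rot]; ring
      rw [hs, euler hf, ← XX, mul_smul_comm]
      ring
    apply nsmul_mem_cancel (by omega : m ≠ 0)
    rw [key]
    refine Ideal.add_mem _ (Ideal.sum_mem _ fun k _ => Ideal.mul_mem_left _ _ (h j k)) ?_
    exact Ideal.mul_mem_right _ _ hXXJ
  choose v hv using fun j => Ideal.mem_span_singleton'.mp (hXf j)
  -- hv j : v j * XX R N = X j * f
  have hsum1 : ∑ j, pderiv j (X j * f) = N • f + m • f := by
    have hterm : ∀ j : Fin N, pderiv j (X j * f) = f + X j * pderiv j f := by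
      intro j; rw [pderiv_mul, pderiv_X_self]; ring
    rw [Finset.sum_congr rfl fun j _ => hterm j, Finset.sum_add_distrib, euler hf,
      Finset.sum_const, Finset.card_univ, Fintype.card_fin]
  have hsum2 : ∑ j, pderiv j (X j * f)
      = 2 * (∑ j, X j * v j) + XX R N * ∑ j, pderiv j (v j) := by
    have hterm : ∀ j : Fin N, pderiv j (X j * f)
        = 2 * (X j * v j) + XX R N * pderiv j (v j) := by
      intro j
      rw [show X j * f = XX R N * v j from by rw [← hv j]; ring, pderiv_mul, pderiv_XX]
      ring
    rw [Finset.sum_congr rfl fun j _ => hterm j, Finset.sum_add_distrib, ← Finset.mul_sum,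
      ← Finset.mul_sum]
  have hSf : ∑ j, X j * v j = f := by
    have hXXeq : XX R N * ((∑ j, X j * v j) - f) = 0 := by
      rw [mul_sub, Finset.mul_sum]
      have : ∀ j : Fin N, XX R N * (X j * v j) = X j * (X j * f) := by
        intro j
        rw [show X j * f = XX R N * v j from by rw [← hv j]; ring]
        ring
      rw [Finset.sum_congr rfl fun j _ => this j]
      rw [show ∑ j : Fin N, X j * (X j * f) = (∑ j : Fin N, X j ^ 2) * f from by
        rw [Finset.sum_mul]; apply Finset.sum_congr rfl; intro j _; ring, ← XX, sub_self]
    exact sub_eq_zero.mp (XX_regular (by omega) hXXeq)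
  have hfin : (N + m - 2) • f = XX R N * ∑ j, pderiv j (v j) := by
    have heq : N • f + m • f = 2 * f + XX R N * ∑ j, pderiv j (v j) := by
      rw [← hsum1, hsum2, hSf]
    rw [nsmul_eq_mul, nsmul_eq_mul] at heq
    rw [nsmul_eq_mul]
    have hcast : ((N + m - 2 : ℕ) : MvPolynomial (Fin N) R)
        = (N : MvPolynomial (Fin N) R) + m - 2 := by
      push_cast [Nat.cast_sub (by omega : 2 ≤ N + m)]
      ring
    rw [hcast]
    linear_combination heq
  apply nsmul_mem_cancel (by omega : N + m - 2 ≠ 0)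
  rw [hfin]
  exact Ideal.mul_mem_right _ _ hXXJ

end Stmt10Aux

open Stmt10Aux in
/-- over a ℚ-algebra, if all `M_{jk} p` lie in the ideal generated by
`X·X − c`, then `p` is congruent to a constant modulo that ideal. -/
theorem stmt10 {R : Type*} [CommRing R] [Algebra ℚ R] {N : ℕ} (hN : 2 ≤ N)
    (c : R) (p : MvPolynomial (Fin N) R)
    (h : ∀ j k : Fin N, j ≠ k → rot j k p ∈ Ideal.span {XX R N - C c}) :
    ∃ c' : R, p - C c' ∈ Ideal.span {XX R N - C c} := by
  set I := Ideal.span {XX R N - C c} with hI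
  have hqI : XX R N - C c ∈ I := Ideal.subset_span (Set.mem_singleton _)
  suffices H : ∀ (d : ℕ) (p : MvPolynomial (Fin N) R), p.totalDegree ≤ d →
      (∀ j k : Fin N, j ≠ k → rot j k p ∈ I) → ∃ c' : R, p - C c' ∈ I from
    H p.totalDegree p le_rfl h
  intro d
  induction d with
  | zero =>
    intro p hdeg hrot
    refine ⟨coeff 0 p, ?_⟩
    have hp : p = C (coeff 0 p) := by
      conv_lhs => rw [← p.sum_homogeneousComponent]
      rw [Nat.le_zero.mp hdeg]
      simp
    rw [← hp, sub_self]
    exact zero_mem _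
  | succ d ih =>
    intro p hdeg hrot
    by_cases hle : p.totalDegree ≤ d
    · exact ih p hle hrot
    have hdeq : p.totalDegree = d + 1 := by omega
    set m := d + 1 with hm
    set pm := homogeneousComponent m p with hpm
    have hpmdeg : pm.totalDegree ≤ m := (homogeneousComponent_isHomogeneous m p).totalDegree_le
    have hpmJ : pm ∈ Ideal.span {XX R N} := by
      apply homog_case hN (by omega : 1 ≤ m) (homogeneousComponent_isHomogeneous m p)
      intro j k
      by_cases hjk : j = k
      · subst hjk; rw [rot_self]; exact zero_mem _
      obtain ⟨f, hf⟩ := Ideal.mem_span_singleton'.mp (hrot j k hjk)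
      -- hf : f * (XX R N - C c) = rot j k p
      have hrotpm : rot j k pm = homogeneousComponent m (rot j k p) := (hcomp_rot j k m p).symm
      by_cases hf0 : f = 0
      · rw [hrotpm, ← hf, hf0, zero_mul]
        simp only [map_zero]
        exact zero_mem _
      · have hdegf : f.totalDegree + 2 ≤ m := by
          have h1 : ((XX R N - C c) * f).totalDegree = f.totalDegree + 2 :=
            totalDegree_XXc_mul (by omega) c hf0
          have h2 : (rot j k p).totalDegree ≤ m := hdeq ▸ totalDegree_rot_le j k p
          rw [← hf, mul_comm] at h2
          omega
        have hkey : rot j k pm = XX R N * homogeneousComponent (m - 2) f := by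
          rw [hrotpm, ← hf]
          have hexp : f * (XX R N - C c) = XX R N * f - C c * f := by ring
          rw [hexp, map_sub, show m = (m-2) + 2 from by omega, hcomp_XX_mul,
            homogeneousComponent_C_mul,
            homogeneousComponent_eq_zero _ f (by omega : f.totalDegree < (m-2)+2),
            mul_zero, sub_zero]
          norm_num
        rw [hkey]
        exact Ideal.mul_mem_right _ _ (Ideal.subset_span (Set.mem_singleton _))
    obtain ⟨g, hg⟩ := Ideal.mem_span_singleton'.mp hpmJ
    -- hg : g * XX R N = pm
    set p' := p - (XX R N - C c) * g with hp'
    have hrot' : ∀ j k : Fin N, j ≠ k → rot j k p' ∈ I := by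
      intro j k hjk
      rw [hp', rot_sub, rot_mul, rot_XXc, mul_zero, add_zero]
      exact Ideal.sub_mem _ (hrot j k hjk) (Ideal.mul_mem_right _ _ hqI)
    have hdegp' : p'.totalDegree ≤ d := by
      have hsplit : p' = (p - pm) + C c * g := by rw [hp', ← hg]; ring
      have h1 : (p - pm).totalDegree ≤ d := by
        have hs := p.sum_homogeneousComponent
        rw [hdeq, Finset.sum_range_succ] at hs
        have hpdiff : p - pm = ∑ i ∈ Finset.range m, homogeneousComponent i p := by
          rw [hpm]; linear_combination -hs
        rw [hpdiff]
        apply totalDegree_finsetSum_le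
        intro i hi
        refine le_trans (homogeneousComponent_isHomogeneous i p).totalDegree_le ?_
        simp only [Finset.mem_range] at hi
        omega
      have h2 : (C c * g).totalDegree ≤ d := by
        by_cases hg0 : g = 0
        · simp [hg0]
        · have hXg : (XX R N * g).totalDegree = g.totalDegree + 2 := by
            have := totalDegree_XXc_mul (show 1 ≤ N by omega) (0 : R) hg0
            simpa using this
          have hgle : g.totalDegree + 2 ≤ m := by
            rw [← hXg, mul_comm, hg]
            exact hpmdeg
          refine le_trans (totalDegree_mul _ _) ?_
          rw [totalDegree_C]
          omega
      rw [hsplit]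
      refine le_trans (totalDegree_add _ _) ?_
      exact max_le h1 h2
    obtain ⟨c', hc'⟩ := ih p' hdegp' hrot'
    refine ⟨c', ?_⟩
    have hfin : p - C c' = (p' - C c') + (XX R N - C c) * g := by rw [hp']; ring
    rw [hfin]
    exact Ideal.add_mem _ hc' (Ideal.mul_mem_right _ _ hqI)
end

section
/- Let m ≥ 2 and let c_1,…,c_m be distinct elements of R such that for all i ≠ j the difference c_i − c_j is not a zero divisor in R. If p ∈ R[X_1,…,X_N] is divisible by X·X − c_j for each j = 1,…,m, then p is divisible by the product Π_{j=1}^m (X·X − c_j). -/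
open MvPolynomial

lemma C_mul_eq_zero {R : Type*} [CommRing R] {σ : Type*} {d : R}
    (hd : d ∈ nonZeroDivisors R) {r : MvPolynomial σ R} (h : C d * r = 0) : r = 0 := by
  ext m
  have := congrArg (fun q => MvPolynomial.coeff m q) h
  simp only [coeff_C_mul, coeff_zero] at this
  simpa using (mul_right_mem_nonZeroDivisors_eq_zero_iff hd).mp (by rwa [mul_comm] at this)

lemma key {R : Type*} [CommRing R] {n : ℕ} (c d : R) (hd : d ∈ nonZeroDivisors R)
    (q : MvPolynomial (Fin (n+1)) R)
    (h : ((∑ j, X j ^ 2 : MvPolynomial (Fin (n+1)) R) - C c) ∣ C d * q) :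
    ((∑ j, X j ^ 2 : MvPolynomial (Fin (n+1)) R) - C c) ∣ q := by
  set e := finSuccEquiv R n
  have hXX : e ((∑ j, X j ^ 2 : MvPolynomial (Fin (n+1)) R) - C c)
      = Polynomial.X ^ 2 + Polynomial.C ((∑ j, X j ^ 2 : MvPolynomial (Fin n) R) - C c) := by
    have h0 : e (X 0) = Polynomial.X := finSuccEquiv_X_zero
    have hs : ∀ j : Fin n, e (X j.succ) = Polynomial.C (X j) := fun j => finSuccEquiv_X_succ
    have hc : ∀ r : R, e (C r) = Polynomial.C (C r) := fun r => by
      simp [e, finSuccEquiv_apply]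
    rw [Fin.sum_univ_succ]
    simp only [map_sub, map_add, map_sum, map_pow, h0, hs, hc, Polynomial.C_sub,
      Polynomial.C_pow]
    ring
  have hmonic : (Polynomial.X ^ 2 +
      Polynomial.C ((∑ j, X j ^ 2 : MvPolynomial (Fin n) R) - C c)).Monic :=
    Polynomial.monic_X_pow_add (lt_of_le_of_lt (Polynomial.degree_C_le) (by norm_num))
  have h2 : e ((∑ j, X j ^ 2 : MvPolynomial (Fin (n+1)) R) - C c) ∣ e (C d * q) :=
    map_dvd e.toRingHom h
  rw [hXX] at h2
  have hCd : e (C d * q) = (C d : MvPolynomial (Fin n) R) • e q := by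
    rw [map_mul]
    rw [show e (C d) = Polynomial.C (C d) by simp [e, finSuccEquiv_apply]]
    rw [Polynomial.smul_eq_C_mul]
  rw [hCd, ← Polynomial.modByMonic_eq_zero_iff_dvd hmonic, Polynomial.smul_modByMonic] at h2
  have hz : e q %ₘ (Polynomial.X ^ 2 + Polynomial.C ((∑ j, X j ^ 2 : MvPolynomial (Fin n) R) - C c)) = 0 := by
    apply Polynomial.ext
    intro k
    have := congrArg (fun p => Polynomial.coeff p k) h2
    simp only [Polynomial.coeff_smul, Polynomial.coeff_zero, smul_eq_mul] at this
    rw [Polynomial.coeff_zero]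
    exact C_mul_eq_zero hd this
  rw [Polynomial.modByMonic_eq_zero_iff_dvd hmonic, ← hXX] at hz
  exact (map_dvd_iff e).mp hz

theorem aux_stmt12 {R : Type*} [CommRing R] {N : ℕ} (hN : 2 ≤ N)
    (m : ℕ) (hm : 2 ≤ m) (c : Fin m → R)
    (hdist : Function.Injective c)
    (hdiff : ∀ i j : Fin m, i ≠ j → c i - c j ∈ nonZeroDivisors R)
    (p : MvPolynomial (Fin N) R)
    (hdvd : ∀ j : Fin m, ((∑ i, X i ^ 2 : MvPolynomial (Fin N) R) - C (c j)) ∣ p) :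
    (∏ j : Fin m, ((∑ i, X i ^ 2 : MvPolynomial (Fin N) R) - C (c j))) ∣ p := by
  obtain ⟨n, rfl⟩ : ∃ n, N = n + 1 := ⟨N - 1, by omega⟩
  classical
  have main : ∀ S : Finset (Fin m), ∀ q : MvPolynomial (Fin (n+1)) R,
      (∀ j ∈ S, ((∑ i, X i ^ 2 : MvPolynomial (Fin (n+1)) R) - C (c j)) ∣ q) →
      (∏ j ∈ S, ((∑ i, X i ^ 2 : MvPolynomial (Fin (n+1)) R) - C (c j))) ∣ q := by
    intro S
    induction S using Finset.induction_on with
    | empty => intro q _; simp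
    | insert a S ha IH =>
      intro q hq
      obtain ⟨r, hr⟩ := hq a (Finset.mem_insert_self a S)
      have hS : ∀ j ∈ S, ((∑ i, X i ^ 2 : MvPolynomial (Fin (n+1)) R) - C (c j)) ∣ r := by
        intro j hj
        have hja : j ≠ a := fun h => ha (h ▸ hj)
        have h1 : ((∑ i, X i ^ 2 : MvPolynomial (Fin (n+1)) R) - C (c j)) ∣ q :=
          hq j (Finset.mem_insert_of_mem hj)
        have h2 : ((∑ i, X i ^ 2 : MvPolynomial (Fin (n+1)) R) - C (c j)) ∣
            C (c j - c a) * r := by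
          have heq : (C (c j - c a) : MvPolynomial (Fin (n+1)) R) * r
              = q - ((∑ i, X i ^ 2 : MvPolynomial (Fin (n+1)) R) - C (c j)) * r := by
            rw [hr, C_sub]; ring
          rw [heq]
          exact dvd_sub h1 (Dvd.intro r rfl)
        exact key (c j) (c j - c a) (hdiff j a hja) r h2
      rw [Finset.prod_insert ha, hr]
      exact mul_dvd_mul_left _ (IH r hS)
  exact main Finset.univ p (fun j _ => hdvd j)

/-- if `c_1,…,c_m` (`m ≥ 2`) are distinct with no difference `c_i − c_j`
a zero divisor, and `X·X − c_j` divides `p` for each `j`, then `Π_j (X·X − c_j)`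
divides `p`. -/
theorem stmt12 {R : Type*} [CommRing R] {N : ℕ} (hN : 2 ≤ N)
    (m : ℕ) (hm : 2 ≤ m) (c : Fin m → R)
    (hdist : Function.Injective c)
    (hdiff : ∀ i j : Fin m, i ≠ j → c i - c j ∈ nonZeroDivisors R)
    (p : MvPolynomial (Fin N) R)
    (hdvd : ∀ j : Fin m, (XX R N - C (c j)) ∣ p) :
    (∏ j : Fin m, (XX R N - C (c j))) ∣ p := by
  unfold XX at hdvd ⊢
  exact aux_stmt12 hN m hm c hdist hdiff p hdvd
end
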